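/- arXiv:2007.12428 — 6 statements merged into one kernel-verified Lean document; each statement's English description precedes it below -/
import Mathlib

section
/- Let t0 ≥ 0 and let γ : [t0,∞) → (0,∞) be nonincreasing and twice continuously differentiable, satisfying γ''(t) ≥ 2β²γ(t)³ for all t ≥ t0, for some β > 0. Then γ'(t) ≤ -βγ(t)² for all t ≥ t0. -/
open Set

/-- Derivative (within `Ici t0`) of an antitone function is nonpositive. -/
lemma deriv_nonpos_of_antitoneOn {t0 : ℝ} {f : ℝ → ℝ} {d : ℝ}
    (hf : AntitoneOn f (Ici t0)) {x : ℝ} (hx : x ∈ Ici t0)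
    (hd : HasDerivWithinAt f d (Ici t0) x) : d ≤ 0 := by
  rw [hasDerivWithinAt_iff_tendsto_slope] at hd
  have hsub : Ioi x ⊆ (Ici t0) \ {x} := fun y hy =>
    ⟨mem_Ici.mpr (le_trans (mem_Ici.mp hx) (le_of_lt (mem_Ioi.mp hy))), ne_of_gt hy⟩
  have hne : (nhdsWithin x ((Ici t0) \ {x})).NeBot :=
    Filter.neBot_of_le (f := nhdsWithin x (Ioi x)) (nhdsWithin_mono x hsub)
  refine le_of_tendsto hd ?_
  filter_upwards [self_mem_nhdsWithin] with y hy
  rcases hy with ⟨hy0, hyne⟩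
  have hxy : x ≠ y := fun h => hyne (h ▸ rfl)
  rw [slope_def_field]
  rcases lt_or_gt_of_ne hxy with h | h
  · -- x < y : f y ≤ f x, y - x > 0
    have : f y ≤ f x := hf hx hy0 h.le
    have hd0 : 0 < y - x := by linarith
    exact div_nonpos_of_nonpos_of_nonneg (by linarith) hd0.le
  · -- y < x : f x ≤ f y, y - x < 0
    have : f x ≤ f y := hf hy0 hx h.le
    have hd0 : y - x < 0 := by linarith
    exact div_nonpos_of_nonneg_of_nonpos (by linarith) hd0.le

theorem stmt_0 (t0 β : ℝ) (ht0 : 0 ≤ t0) (hβ : 0 < β)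
    (γ γ' γ'' : ℝ → ℝ)
    (hpos : ∀ t ∈ Ici t0, 0 < γ t)
    (hanti : AntitoneOn γ (Ici t0))
    (hd1 : ∀ t ∈ Ici t0, HasDerivWithinAt γ (γ' t) (Ici t0) t)
    (hd2 : ∀ t ∈ Ici t0, HasDerivWithinAt γ' (γ'' t) (Ici t0) t)
    (hc1 : ContinuousOn γ' (Ici t0))
    (hc2 : ContinuousOn γ'' (Ici t0))
    (hineq : ∀ t ∈ Ici t0, 2 * β ^ 2 * γ t ^ 3 ≤ γ'' t) :
    ∀ t ∈ Ici t0, γ' t ≤ -β * γ t ^ 2 := by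
  -- γ' ≤ 0 on Ici t0
  have hγ'le : ∀ t ∈ Ici t0, γ' t ≤ 0 :=
    fun t ht => deriv_nonpos_of_antitoneOn hanti ht (hd1 t ht)
  have hγcont : ContinuousOn γ (Ici t0) := fun t ht => (hd1 t ht).continuousWithinAt
  -- F := γ'^2 - β^2 γ^4 is antitone on Ici t0
  set F : ℝ → ℝ := fun t => γ' t ^ 2 - β ^ 2 * γ t ^ 4 with hF
  have hFanti : AntitoneOn F (Ici t0) := by
    apply antitoneOn_of_hasDerivWithinAt_nonpos (f' := fun t =>
        2 * γ' t ^ 1 * γ'' t - β ^ 2 * (4 * γ t ^ 3 * γ' t)) (convex_Ici t0)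
    · exact (hc1.pow 2).sub ((continuousOn_const).mul (hγcont.pow 4))
    · intro x hx
      rw [interior_Ici] at hx ⊢
      have hx0 : x ∈ Ici t0 := mem_Ici.mpr (le_of_lt (mem_Ioi.mp hx))
      have hsub : Ioi t0 ⊆ Ici t0 := Ioi_subset_Ici_self
      exact (((hd2 x hx0).mono hsub).pow 2).sub
        ((((hd1 x hx0).mono hsub).pow 4).const_mul (β ^ 2))
    · intro x hx
      rw [interior_Ici] at hx
      have hx0 : x ∈ Ici t0 := mem_Ici.mpr (le_of_lt (mem_Ioi.mp hx))
      have h1 := hineq x hx0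
      have h2 := hγ'le x hx0
      nlinarith [hpos x hx0]
  -- main argument
  intro t1 ht1
  by_contra hcon
  push_neg at hcon
  have hγt1 : 0 < γ t1 := hpos t1 ht1
  have hγ'1 : γ' t1 ≤ 0 := hγ'le t1 ht1
  set c : ℝ := β ^ 2 * γ t1 ^ 4 - γ' t1 ^ 2 with hc
  have hcpos : 0 < c := by nlinarith
  -- on Ici t1, γ t1 * γ'' t ≥ 2 c
  have hlow : ∀ t ∈ Ici t0, t1 ≤ t → 2 * c ≤ γ t1 * γ'' t := by
    intro t ht htt1
    have hFt : F t ≤ F t1 := hFanti ht1 ht htt1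
    have hγle : γ t ≤ γ t1 := hanti ht1 ht htt1
    have hγpos : 0 < γ t := hpos t ht
    have hβ4 : c ≤ β ^ 2 * γ t ^ 4 := by
      have : γ' t ^ 2 - β ^ 2 * γ t ^ 4 ≤ -c := by
        simp only [hF] at hFt; linarith [hFt]
      nlinarith [sq_nonneg (γ' t)]
    have h1 := hineq t ht
    nlinarith [mul_le_mul_of_nonneg_left h1 hγt1.le,
      mul_nonneg (sub_nonneg.mpr hγle) (by positivity : (0:ℝ) ≤ β ^ 2 * γ t ^ 3)]
  -- g := γ t1 * γ' t - 2 c t is monotone on Ici t1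
  set g : ℝ → ℝ := fun t => γ t1 * γ' t - 2 * c * t with hg
  have hsub1 : Ici t1 ⊆ Ici t0 := Ici_subset_Ici.mpr ht1
  have hgmono : MonotoneOn g (Ici t1) := by
    apply monotoneOn_of_hasDerivWithinAt_nonneg (f' := fun t => γ t1 * γ'' t - 2 * c * 1)
      (convex_Ici t1)
    · exact ((continuousOn_const.mul (hc1.mono hsub1)).sub
        (continuousOn_const.mul continuousOn_id))
    · intro x hx
      rw [interior_Ici] at hx ⊢
      have hx0 : x ∈ Ici t0 := mem_Ici.mpr (le_trans ht1 (le_of_lt (mem_Ioi.mp hx)))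
      have hsub : Ioi t1 ⊆ Ici t0 := fun y hy => mem_Ici.mpr (le_trans ht1 (le_of_lt (mem_Ioi.mp hy)))
      exact (((hd2 x hx0).mono hsub).const_mul (γ t1)).sub
        (((hasDerivWithinAt_id x _).const_mul (2 * c)))
    · intro x hx
      rw [interior_Ici] at hx
      have hx0 : x ∈ Ici t0 := mem_Ici.mpr (le_trans ht1 (le_of_lt (mem_Ioi.mp hx)))
      have := hlow x hx0 (le_of_lt hx)
      linarith
  -- pick T far out to get contradiction
  set T : ℝ := t1 + (1 + γ t1 * (-(γ' t1))) / (2 * c) with hT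
  have hnum : 0 < 1 + γ t1 * (-(γ' t1)) := by nlinarith
  have hTge : t1 ≤ T := by
    have h : 0 < (1 + γ t1 * (-(γ' t1))) / (2 * c) := by positivity
    rw [hT]
    linarith
  have hTmem : T ∈ Ici t0 := le_trans ht1 hTge
  have hgle : g t1 ≤ g T := hgmono (mem_Ici.mpr le_rfl) hTge hTge
  have hcanc : (2 * c) * ((1 + γ t1 * (-(γ' t1))) / (2 * c)) = 1 + γ t1 * (-(γ' t1)) :=
    mul_div_cancel₀ _ (by positivity)
  have hγ'T : γ' T ≤ 0 := hγ'le T hTmem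
  have : (1 : ℝ) ≤ γ t1 * γ' T := by
    simp only [hg, hT] at hgle
    nlinarith [hgle, hcanc]
  nlinarith
end

section
/- Let ω : [t0,T] → [0,∞) be integrable, C ≥ 0, and μ : [t0,T] → ℝ continuous. If (1/2)μ(t)² ≤ (1/2)C² + ∫_{t0}^t ω(s)μ(s) ds for all t ∈ [t0,T], then |μ(t)| ≤ C + ∫_{t0}^t ω(s) ds for all t ∈ [t0,T]. -/
open Set MeasureTheory

private lemma selfconv (a b : ℝ) (f : ℝ → ℝ)
    (hf : IntegrableOn f (Ioc a b)) :
    ∫ s in Ioc a b, f s * ∫ u in Ioc a s, f u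
      = (1/2) * (∫ s in Ioc a b, f s)^2 := by
  set m := volume.restrict (Ioc a b) with hm
  set F : ℝ × ℝ → ℝ := ({p : ℝ × ℝ | p.2 ≤ p.1}).indicator (fun p => f p.1 * f p.2) with hF
  have hfm : Integrable f m := hf
  have hFint : Integrable F (m.prod m) :=
    (hfm.mul_prod hfm).indicator (isClosed_le continuous_snd continuous_fst).measurableSet
  have key1 : ∀ s ∈ Ioc a b, (∫ u, F (s, u) ∂m) = f s * ∫ u in Ioc a s, f u := by
    intro s hs
    have heq : (fun u => F (s, u)) = (Iic s).indicator (fun u => f s * f u) := by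
      ext u
      by_cases h : u ≤ s <;> simp [hF, indicator, h]
    rw [heq, integral_indicator measurableSet_Iic, hm,
      Measure.restrict_restrict measurableSet_Iic]
    have hset : Iic s ∩ Ioc a b = Ioc a s := by
      rw [inter_comm, Ioc_inter_Iic, min_eq_right hs.2]
    rw [hset, integral_const_mul]
  have key2 : ∀ u ∈ Ioc a b, (∫ s, F (s, u) ∂m) = (∫ s in Ioc u b, f s) * f u := by
    intro u hu
    have heq : (fun s => F (s, u)) = (Ici u).indicator (fun s => f s * f u) := by
      ext s
      by_cases h : u ≤ s <;> simp [hF, indicator, h]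
    rw [heq, integral_indicator measurableSet_Ici, hm,
      Measure.restrict_restrict measurableSet_Ici]
    have hset : Ici u ∩ Ioc a b = Icc u b := by
      ext s; simp only [mem_inter_iff, mem_Ici, mem_Ioc, mem_Icc]
      constructor
      · rintro ⟨h1, _, h3⟩; exact ⟨h1, h3⟩
      · rintro ⟨h1, h2⟩; exact ⟨h1, hu.1.trans_le h1, h2⟩
    rw [hset, integral_Icc_eq_integral_Ioc, integral_mul_const]
  set K := ∫ s in Ioc a b, f s with hK
  have hswap : ∫ s, ∫ u, F (s, u) ∂m ∂m = ∫ u, ∫ s, F (s, u) ∂m ∂m :=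
    integral_integral_swap hFint
  have ae1 : ∀ᵐ s ∂m, (∫ u, F (s, u) ∂m) = f s * ∫ u in Ioc a s, f u := by
    rw [hm]
    exact (ae_restrict_iff' measurableSet_Ioc).2 (Filter.Eventually.of_forall key1)
  have ae2 : ∀ᵐ u ∂m, (∫ s, F (s, u) ∂m) = (∫ s in Ioc u b, f s) * f u := by
    rw [hm]
    exact (ae_restrict_iff' measurableSet_Ioc).2 (Filter.Eventually.of_forall key2)
  have i1 : Integrable (fun s => f s * ∫ u in Ioc a s, f u) m :=
    hFint.integral_prod_left.congr ae1
  have i2 : Integrable (fun u => (∫ s in Ioc u b, f s) * f u) m :=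
    hFint.integral_prod_right.congr ae2
  have eqA := integral_congr_ae ae1
  have eqB := integral_congr_ae ae2
  have hadd := integral_add i1 i2
  beta_reduce at eqA eqB hadd
  have hsum : ∫ s, ((f s * ∫ u in Ioc a s, f u) + (∫ u in Ioc s b, f u) * f s) ∂m
      = K * K := by
    have ae3 : ∀ᵐ s ∂m, (f s * ∫ u in Ioc a s, f u) + (∫ u in Ioc s b, f u) * f s
        = f s * K := by
      rw [hm]
      refine (ae_restrict_iff' measurableSet_Ioc).2 (Filter.Eventually.of_forall ?_)
      intro s hs
      have hsplit : (∫ u in Ioc a s, f u) + ∫ u in Ioc s b, f u = K := by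
        rw [hK, ← Ioc_union_Ioc_eq_Ioc hs.1.le hs.2,
          setIntegral_union (Ioc_disjoint_Ioc_of_le le_rfl) measurableSet_Ioc
            (hf.mono_set (Ioc_subset_Ioc_right hs.2))
            (hf.mono_set (Ioc_subset_Ioc_left hs.1.le))]
      linear_combination f s * hsplit
    have e4 := integral_congr_ae ae3
    beta_reduce at e4
    rw [e4, integral_mul_const]
  have h2 : (∫ s, (f s * ∫ u in Ioc a s, f u) ∂m)
      = ∫ u, (∫ s in Ioc u b, f s) * f u ∂m := by
    refine Eq.trans ?_ (hswap.trans eqB)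
    exact eqA.symm
  have hfin : (∫ s, (f s * ∫ u in Ioc a s, f u) ∂m) = (1/2) * K^2 := by
    have := hadd.symm.trans hsum
    nlinarith [this, h2]
  exact hfin

theorem stmt_1 (t0 T C : ℝ) (hC : 0 ≤ C) (ω μ : ℝ → ℝ)
    (hω_int : IntegrableOn ω (Icc t0 T))
    (hω_nonneg : ∀ t ∈ Icc t0 T, 0 ≤ ω t)
    (hμ : ContinuousOn μ (Icc t0 T))
    (h : ∀ t ∈ Icc t0 T, (1/2) * μ t ^ 2 ≤ (1/2) * C ^ 2 + ∫ s in t0..t, ω s * μ s) :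
    ∀ t ∈ Icc t0 T, |μ t| ≤ C + ∫ s in t0..t, ω s := by
  intro t ht
  have ht0T : t0 ≤ T := ht.1.trans ht.2
  refine le_of_forall_pos_le_add ?_
  intro ε hε
  -- the comparison function
  set g : ℝ → ℝ := fun s => (C + ε) + ∫ u in t0..s, ω u with hg
  suffices hgoal : |μ t| ≤ g t by
    have : g t = (C + ∫ s in t0..t, ω s) + ε := by simp only [hg]; ring
    linarith [hgoal, this.symm.le]
  -- continuity of g on [t0, T]
  have hgc : ContinuousOn g (Icc t0 T) := by
    have := intervalIntegral.continuousOn_primitive_interval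
      (f := ω) (μ := volume) (a := t0) (b := T) (by rwa [uIcc_of_le ht0T])
    rw [uIcc_of_le ht0T] at this
    exact continuousOn_const.add this
  -- |μ t0| ≤ C
  have hμt0 : |μ t0| ≤ C := by
    have h0 := h t0 ⟨le_refl t0, ht0T⟩
    rw [intervalIntegral.integral_same] at h0
    have : μ t0 ^ 2 ≤ C ^ 2 := by linarith
    nlinarith [abs_nonneg (μ t0), sq_abs (μ t0)]
  have hgt0 : |μ t0| < g t0 := by
    have : g t0 = C + ε := by simp [hg]
    rw [this]; linarith
  -- first crossing argument
  set A : Set ℝ := {s ∈ Icc t0 T | g s ≤ |μ s|} with hA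
  by_cases hAne : A.Nonempty
  swap
  · -- A empty: t ∉ A
    by_contra hcon
    exact hAne ⟨t, ht, le_of_not_ge hcon⟩
  exfalso
  have habs : ContinuousOn (fun s => |μ s|) (Icc t0 T) := hμ.abs
  have hAclosed : IsClosed A := by
    have : A = Icc t0 T ∩ (fun s => g s - |μ s|) ⁻¹' (Iic 0) := by
      ext s; simp only [hA, mem_sep_iff, mem_inter_iff, mem_preimage, mem_Iic]
      constructor
      · rintro ⟨h1, h2⟩; exact ⟨h1, by linarith⟩
      · rintro ⟨h1, h2⟩; exact ⟨h1, by linarith⟩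
    rw [this]
    exact ContinuousOn.preimage_isClosed_of_isClosed (hgc.sub habs) isClosed_Icc isClosed_Iic
  have hAbdd : BddBelow A := ⟨t0, fun s hs => hs.1.1⟩
  set c := sInf A with hc
  have hcA : c ∈ A := hAclosed.csInf_mem hAne hAbdd
  have hcIcc : c ∈ Icc t0 T := hcA.1
  have hct0 : t0 < c := by
    rcases lt_or_eq_of_le hcIcc.1 with h' | h'
    · exact h'
    · exfalso; rw [← h'] at hcA; exact absurd hcA.2 (not_le.2 hgt0)
  -- below c : |μ s| ≤ g s for s ∈ Ioo t0 c
  have hbelow : ∀ s ∈ Ioo t0 c, |μ s| ≤ g s := by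
    intro s hs
    have hsIcc : s ∈ Icc t0 T := ⟨hs.1.le, hs.2.le.trans hcIcc.2⟩
    by_contra hcon
    exact (notMem_of_lt_csInf hs.2 hAbdd) ⟨hsIcc, le_of_not_ge hcon⟩
  -- integrability facts on Ioc t0 c
  have hsub : Ioc t0 c ⊆ Icc t0 T := fun s hs => ⟨hs.1.le, hs.2.trans hcIcc.2⟩
  have hsubI : Icc t0 c ⊆ Icc t0 T := fun s hs => ⟨hs.1, hs.2.trans hcIcc.2⟩
  have hωc : IntegrableOn ω (Ioc t0 c) := hω_int.mono_set hsub
  have hμc : ContinuousOn μ (Icc t0 c) := hμ.mono hsubI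
  have hωμ : IntegrableOn (fun s => ω s * μ s) (Ioc t0 c) :=
    ((hω_int.mono_set (fun s hs => hsubI hs)).mul_continuousOn hμc isCompact_Icc).mono_set
      Ioc_subset_Icc_self
  -- G : running integral of ω
  set G : ℝ → ℝ := fun s => ∫ u in Ioc t0 s, ω u with hG
  have hGc : ContinuousOn G (Icc t0 c) := by
    exact intervalIntegral.continuousOn_primitive (hω_int.mono_set (fun s hs => hsubI hs))
  have hωG : IntegrableOn (fun s => ω s * G s) (Ioc t0 c) :=
    ((hω_int.mono_set (fun s hs => hsubI hs)).mul_continuousOn hGc isCompact_Icc).mono_set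
      Ioc_subset_Icc_self
  have hωg : IntegrableOn (fun s => ω s * g s) (Ioc t0 c) := by
    have : ∀ s ∈ Ioc t0 c, ω s * g s = ω s * (C + ε) + ω s * G s := by
      intro s hs
      have : g s = (C + ε) + G s := by
        simp only [hg, hG]
        rw [intervalIntegral.integral_of_le hs.1.le]
      rw [this]; ring
    exact IntegrableOn.congr_fun ((hωc.mul_const (C + ε)).add hωG) (fun s hs => (this s hs).symm)
      measurableSet_Ioc
  -- main inequality chain at c
  have hhc := h c hcIcc
  have hK : (∫ u in t0..c, ω u) = G c := by
    simp only [hG]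
    rw [intervalIntegral.integral_of_le hct0.le]
  have hgc' : g c = (C + ε) + G c := by simp only [hg]; rw [hK]
  -- step 1: ∫ ωμ ≤ ∫ ω g  over Ioc t0 c (via Ioo)
  have hmono : (∫ s in Ioc t0 c, ω s * μ s) ≤ ∫ s in Ioc t0 c, ω s * g s := by
    rw [integral_Ioc_eq_integral_Ioo, integral_Ioc_eq_integral_Ioo]
    apply setIntegral_mono_on (hωμ.mono_set Ioo_subset_Ioc_self)
      (hωg.mono_set Ioo_subset_Ioc_self) measurableSet_Ioo
    intro s hs
    have hsI : s ∈ Icc t0 T := ⟨hs.1.le, hs.2.le.trans hcIcc.2⟩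
    have hω0 : 0 ≤ ω s := hω_nonneg s hsI
    have hμg : |μ s| ≤ g s := hbelow s hs
    have : μ s ≤ g s := (le_abs_self _).trans hμg
    nlinarith
  -- step 2: ∫ ω g = (C+ε) G c + (1/2) (G c)^2
  have hsplit2 : (∫ s in Ioc t0 c, ω s * g s)
      = (C + ε) * G c + (1/2) * (G c)^2 := by
    have e1 : (∫ s in Ioc t0 c, ω s * g s)
        = ∫ s in Ioc t0 c, (ω s * (C + ε) + ω s * G s) := by
      apply setIntegral_congr_fun measurableSet_Ioc
      intro s hs
      have : g s = (C + ε) + G s := by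
        simp only [hg, hG]
        rw [intervalIntegral.integral_of_le hs.1.le]
      beta_reduce
      rw [this]; ring
    rw [e1, integral_add (hωc.mul_const (C + ε)) hωG, integral_mul_const,
      selfconv t0 c ω hωc]
    rw [hG]; ring
  -- conclude
  have hcross : g c ≤ |μ c| := hcA.2
  have hG0 : 0 ≤ G c := by
    refine setIntegral_nonneg measurableSet_Ioc ?_
    intro s hs; exact hω_nonneg s (hsub hs)
  have hsq : g c ^ 2 ≤ μ c ^ 2 := by
    have h1 : 0 ≤ g c := by rw [hgc']; linarith
    nlinarith [sq_abs (μ c), hcross, h1]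
  have hint : (∫ s in t0..c, ω s * μ s) = ∫ s in Ioc t0 c, ω s * μ s :=
    intervalIntegral.integral_of_le hct0.le
  rw [hint] at hhc
  rw [hgc'] at hsq
  nlinarith [hhc, hmono, hsplit2, hsq, hε]
end

section
/- Let f : ℝ^{n1} → ℝ and g : ℝ^{n2} → ℝ be differentiable convex functions, A, B, b as above. A point (x*,y*,λ*) satisfies -Aᵀλ* = ∇f(x*), -Bᵀλ* = ∇g(y*), Ax*+By* = b if and only if it is a saddle point of the augmented Lagrangian L, i.e., L(x*,y*,λ) ≤ L(x*,y*,λ*) ≤ L(x,y,λ*) for all (x,y,λ). -/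
open Set

lemma convex_first_order {E : Type*} [NormedAddCommGroup E] [InnerProductSpace ℝ E]
    [CompleteSpace E]
    (f : E → ℝ) (hfc : ConvexOn ℝ univ f) (hfd : Differentiable ℝ f) (x y : E) :
    f x + (inner ℝ (gradient f x) (y - x) : ℝ) ≤ f y := by
  have key : ∀ v, (inner ℝ (gradient f x) v : ℝ) = fderiv ℝ f x v := by
    intro v
    rw [gradient, ← InnerProductSpace.toDual_apply_apply, LinearIsometryEquiv.apply_symm_apply]
  rw [key]
  set ψ : ℝ → ℝ := fun t => f (x + t • (y - x)) with hψ
  have hψc : ConvexOn ℝ univ ψ := by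
    have h := hfc.comp_affineMap (AffineMap.lineMap x y)
    simp only [preimage_univ] at h
    refine (?_ : ψ = _) ▸ h
    funext t
    show f (x + t • (y - x)) = f (AffineMap.lineMap x y t)
    congr 1
    rw [AffineMap.lineMap_apply_module]
    module
  have hline : HasDerivAt (fun t : ℝ => x + t • (y - x)) (y - x) 0 := by
    simpa using ((hasDerivAt_id (0:ℝ)).smul_const (y - x)).const_add x
  have hd : HasDerivAt ψ (fderiv ℝ f x (y - x)) 0 := by
    have h0 : HasFDerivAt f (fderiv ℝ f x) (x + (0:ℝ) • (y - x)) := by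
      simpa using (hfd x).hasFDerivAt
    exact h0.comp_hasDerivAt 0 hline
  have hs := hψc.le_slope_of_hasDerivAt (mem_univ (0:ℝ)) (mem_univ (1:ℝ)) one_pos hd
  rw [slope_def_field] at hs
  simp only [hψ] at hs
  norm_num at hs
  have hms := (fderiv ℝ f x).map_sub y x
  linarith

theorem stmt_3 (n1 n2 m : ℕ)
    (f : EuclideanSpace ℝ (Fin n1) → ℝ) (g : EuclideanSpace ℝ (Fin n2) → ℝ)
    (hfc : ConvexOn ℝ univ f) (hgc : ConvexOn ℝ univ g)
    (hfd : Differentiable ℝ f) (hgd : Differentiable ℝ g)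
    (A : EuclideanSpace ℝ (Fin n1) →L[ℝ] EuclideanSpace ℝ (Fin m))
    (B : EuclideanSpace ℝ (Fin n2) →L[ℝ] EuclideanSpace ℝ (Fin m))
    (b : EuclideanSpace ℝ (Fin m))
    (L : EuclideanSpace ℝ (Fin n1) → EuclideanSpace ℝ (Fin n2) →
      EuclideanSpace ℝ (Fin m) → ℝ)
    (hL : ∀ x y l, L x y l =
      f x + g y + (inner ℝ l (A x + B y - b) : ℝ) + (1/2) * ‖A x + B y - b‖ ^ 2)
    (xs : EuclideanSpace ℝ (Fin n1)) (ys : EuclideanSpace ℝ (Fin n2))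
    (ls : EuclideanSpace ℝ (Fin m)) :
    (-(ContinuousLinearMap.adjoint A ls) = gradient f xs ∧
      -(ContinuousLinearMap.adjoint B ls) = gradient g ys ∧
      A xs + B ys = b) ↔
    (∀ x y l, L xs ys l ≤ L xs ys ls ∧ L xs ys ls ≤ L x y ls) := by
  constructor
  · rintro ⟨hx, hy, hfeas⟩ x y l
    have hres : A xs + B ys - b = 0 := by rw [hfeas, sub_self]
    constructor
    · rw [hL, hL, hres]; simp
    · rw [hL, hL, hres]
      simp only [inner_zero_right, norm_zero]
      have h1 := convex_first_order f hfc hfd xs x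
      have h2 := convex_first_order g hgc hgd ys y
      rw [← hx] at h1
      rw [← hy] at h2
      rw [inner_neg_left, ContinuousLinearMap.adjoint_inner_left] at h1
      rw [inner_neg_left, ContinuousLinearMap.adjoint_inner_left] at h2
      rw [map_sub] at h1 h2
      have hin : (inner ℝ ls (A x + B y - b) : ℝ)
          = (inner ℝ ls (A x) - inner ℝ ls (A xs)) + (inner ℝ ls (B y) - inner ℝ ls (B ys)) := by
        rw [inner_sub_right, inner_add_right, ← hfeas, inner_add_right]
        ring
      have hsq : (0:ℝ) ≤ (1/2) * ‖A x + B y - b‖ ^ 2 := by positivity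
      rw [inner_sub_right] at h1 h2
      have hz : f xs + g ys + 0 + 1/2 * (0:ℝ)^2 = f xs + g ys := by ring
      rw [hz, hin]
      linarith
  · intro h
    have hres : A xs + B ys - b = 0 := by
      have h1 := (h xs ys (ls + (A xs + B ys - b))).1
      rw [hL, hL] at h1
      simp only [inner_add_left] at h1
      have : (inner ℝ (A xs + B ys - b) (A xs + B ys - b) : ℝ) ≤ 0 := by linarith
      rwa [real_inner_self_nonpos] at this
    have hfeas : A xs + B ys = b := by rwa [sub_eq_zero] at hres
    refine ⟨?_, ?_, hfeas⟩
    · -- gradient of f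
      set c := B ys - b with hc
      set φ : EuclideanSpace ℝ (Fin n1) → ℝ :=
        fun x => f x + (inner ℝ ls (A x + c) : ℝ) + (1/2) * ‖A x + c‖ ^ 2 with hφ
      have hmin : IsLocalMin φ xs := by
        refine IsMinOn.isLocalMin ?_ (by simp : univ ∈ nhds xs)
        rw [isMinOn_iff]
        intro x _
        have := (h x ys ls).2
        rw [hL, hL] at this
        simp only [hφ]
        have e1 : A xs + B ys - b = A xs + c := by rw [hc]; abel
        have e2 : ∀ x', A x' + B ys - b = A x' + c := by intro x'; rw [hc]; abel
        rw [e2 xs, e2 x] at this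
        linarith
      have hu : HasFDerivAt (fun x => A x + c) (A : _ →L[ℝ] _) xs :=
        A.hasFDerivAt.add_const c
      have hu0 : A xs + c = 0 := by rw [hc]; rw [← hres]; abel
      have ht3 : HasFDerivAt (fun x => (1/2 : ℝ) * ‖A x + c‖ ^ 2)
          (0 : EuclideanSpace ℝ (Fin n1) →L[ℝ] ℝ) xs := by
        have heq : (fun x => (1/2 : ℝ) * ‖A x + c‖ ^ 2)
            = fun x => (1/2 : ℝ) * (inner ℝ (A x + c) (A x + c) : ℝ) := by
          funext x; rw [real_inner_self_eq_norm_sq]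
        rw [heq]
        have := (hu.inner ℝ hu).const_mul (1/2 : ℝ)
        refine this.congr_fderiv ?_
        ext v
        simp [hu0, fderivInnerCLM_apply]
      have ht2 : HasFDerivAt (fun x => (inner ℝ ls (A x + c) : ℝ))
          ((innerSL ℝ ls).comp A) xs := by
        exact (innerSL ℝ ls).hasFDerivAt.comp xs hu
      have hφd : HasFDerivAt φ
          (fderiv ℝ f xs + (innerSL ℝ ls).comp A + 0) xs :=
        (((hfd xs).hasFDerivAt.add ht2).add ht3)
      have hzero := hmin.hasFDerivAt_eq_zero hφd
      apply ext_inner_right ℝ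
      intro v
      have hv := DFunLike.congr_fun hzero v
      simp only [ContinuousLinearMap.add_apply, ContinuousLinearMap.zero_apply,
        ContinuousLinearMap.comp_apply, innerSL_apply_apply] at hv
      have key : (inner ℝ (gradient f xs) v : ℝ) = fderiv ℝ f xs v := by
        rw [gradient, ← InnerProductSpace.toDual_apply_apply, LinearIsometryEquiv.apply_symm_apply]
      rw [inner_neg_left, ContinuousLinearMap.adjoint_inner_left, key]
      linarith
    · -- gradient of g  (symmetric)
      set c := A xs - b with hc
      set φ : EuclideanSpace ℝ (Fin n2) → ℝ :=
        fun y => g y + (inner ℝ ls (B y + c) : ℝ) + (1/2) * ‖B y + c‖ ^ 2 with hφ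
      have hmin : IsLocalMin φ ys := by
        refine IsMinOn.isLocalMin ?_ (by simp : univ ∈ nhds ys)
        rw [isMinOn_iff]
        intro y _
        have := (h xs y ls).2
        rw [hL, hL] at this
        simp only [hφ]
        have e2 : ∀ y', A xs + B y' - b = B y' + c := by intro y'; rw [hc]; abel
        rw [e2 ys, e2 y] at this
        linarith
      have hu : HasFDerivAt (fun y => B y + c) (B : _ →L[ℝ] _) ys :=
        B.hasFDerivAt.add_const c
      have hu0 : B ys + c = 0 := by rw [hc]; rw [← hres]; abel
      have ht3 : HasFDerivAt (fun y => (1/2 : ℝ) * ‖B y + c‖ ^ 2)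
          (0 : EuclideanSpace ℝ (Fin n2) →L[ℝ] ℝ) ys := by
        have heq : (fun y => (1/2 : ℝ) * ‖B y + c‖ ^ 2)
            = fun y => (1/2 : ℝ) * (inner ℝ (B y + c) (B y + c) : ℝ) := by
          funext y; rw [real_inner_self_eq_norm_sq]
        rw [heq]
        have := (hu.inner ℝ hu).const_mul (1/2 : ℝ)
        refine this.congr_fderiv ?_
        ext v
        simp [hu0, fderivInnerCLM_apply]
      have ht2 : HasFDerivAt (fun y => (inner ℝ ls (B y + c) : ℝ))
          ((innerSL ℝ ls).comp B) ys := by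
        exact (innerSL ℝ ls).hasFDerivAt.comp ys hu
      have hφd : HasFDerivAt φ
          (fderiv ℝ g ys + (innerSL ℝ ls).comp B + 0) ys :=
        (((hgd ys).hasFDerivAt.add ht2).add ht3)
      have hzero := hmin.hasFDerivAt_eq_zero hφd
      apply ext_inner_right ℝ
      intro v
      have hv := DFunLike.congr_fun hzero v
      simp only [ContinuousLinearMap.add_apply, ContinuousLinearMap.zero_apply,
        ContinuousLinearMap.comp_apply, innerSL_apply_apply] at hv
      have key : (inner ℝ (gradient g ys) v : ℝ) = fderiv ℝ g ys v := by
        rw [gradient, ← InnerProductSpace.toDual_apply_apply, LinearIsometryEquiv.apply_symm_apply]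
      rw [inner_neg_left, ContinuousLinearMap.adjoint_inner_left, key]
      linarith
end

section
/- Let r ∈ [0,1], t0 ≥ e, and γ(t) = 1/(t (ln t)^r) for t ≥ t0. Then for every β ∈ (0, 1/3], γ''(t) ≥ 2β²γ(t)³ for all t ≥ t0. -/
open Real

lemma aux_pow (p s : ℝ) (hs : 1 < s) :
    HasDerivAt (fun x : ℝ => Real.log x ^ p) (s⁻¹ * p * Real.log s ^ (p - 1)) s := by
  have hlog : HasDerivAt Real.log s⁻¹ s := Real.hasDerivAt_log (by linarith)
  exact hlog.rpow_const (Or.inl (ne_of_gt (Real.log_pos hs)))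

lemma aux_d1 (r s : ℝ) (hs : 1 < s) :
    HasDerivAt (fun x : ℝ => 1 / (x * Real.log x ^ r))
      (-(Real.log s ^ r + r * Real.log s ^ (r - 1)) / (s * Real.log s ^ r) ^ 2) s := by
  have hL : 0 < Real.log s := Real.log_pos hs
  have hs0 : (0:ℝ) < s := by linarith
  have hden : s * Real.log s ^ r ≠ 0 :=
    ne_of_gt (mul_pos hs0 (Real.rpow_pos_of_pos hL r))
  have h := ((hasDerivAt_id s).mul (aux_pow r s hs)).inv hden
  have heq : (fun x : ℝ => 1 / (x * Real.log x ^ r)) =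
      fun x : ℝ => (x * Real.log x ^ r)⁻¹ := by
    funext x; rw [one_div]
  rw [heq]
  refine h.congr_deriv ?_
  simp only [id, Pi.mul_apply, one_mul]
  field_simp

lemma aux_d2 (r s : ℝ) (hs : 1 < s) :
    HasDerivAt (fun x : ℝ => -(Real.log x ^ r + r * Real.log x ^ (r - 1)) / (x * Real.log x ^ r) ^ 2)
      ((-(s⁻¹ * r * Real.log s ^ (r - 1) + r * (s⁻¹ * (r - 1) * Real.log s ^ (r - 1 - 1))) *
          (s * Real.log s ^ r) ^ 2 -
        -(Real.log s ^ r + r * Real.log s ^ (r - 1)) *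
          (2 * (s * Real.log s ^ r) ^ 1 * (1 * Real.log s ^ r + s * (s⁻¹ * r * Real.log s ^ (r - 1))))) /
        ((s * Real.log s ^ r) ^ 2) ^ 2) s := by
  have hL : 0 < Real.log s := Real.log_pos hs
  have hs0 : (0:ℝ) < s := by linarith
  have hden : (s * Real.log s ^ r) ^ 2 ≠ 0 :=
    pow_ne_zero 2 (ne_of_gt (mul_pos hs0 (Real.rpow_pos_of_pos hL r)))
  exact (((aux_pow r s hs).add ((aux_pow (r - 1) s hs).const_mul r)).neg).div
    (((hasDerivAt_id s).mul (aux_pow r s hs)).pow 2) hden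

theorem stmt_7 (r t0 : ℝ) (hr : r ∈ Set.Icc (0:ℝ) 1) (ht0 : Real.exp 1 ≤ t0) :
    ∀ β ∈ Set.Ioc (0:ℝ) (1/3), ∀ t ≥ t0,
      2 * β ^ 2 * (1 / (t * Real.log t ^ r)) ^ 3 ≤
        deriv (deriv (fun s : ℝ => 1 / (s * Real.log s ^ r))) t := by
  rintro β ⟨hβ0, hβ3⟩ t ht
  obtain ⟨hr0, hr1⟩ := hr
  have he : (1:ℝ) < Real.exp 1 := by
    have := Real.exp_pos 1; nlinarith [Real.add_one_le_exp (1:ℝ)]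
  have ht1 : (1:ℝ) < t := lt_of_lt_of_le he (le_trans ht0 ht)
  have ht0' : (0:ℝ) < t := by linarith
  have hL1 : (1:ℝ) ≤ Real.log t := by
    rw [Real.le_log_iff_exp_le ht0']; exact le_trans ht0 ht
  have hL0 : (0:ℝ) < Real.log t := by linarith
  set L := Real.log t with hLdef
  set X := L ^ r with hXdef
  have hX0 : (0:ℝ) < X := Real.rpow_pos_of_pos hL0 r
  have hX1 : (1:ℝ) ≤ X := Real.one_le_rpow hL1 hr0
  -- rewrite outer deriv using eventual equality of deriv γ with the closed form
  have hev : deriv (fun s : ℝ => 1 / (s * Real.log s ^ r)) =ᶠ[nhds t]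
      (fun s : ℝ => -(Real.log s ^ r + r * Real.log s ^ (r - 1)) / (s * Real.log s ^ r) ^ 2) := by
    filter_upwards [Ioi_mem_nhds ht1] with s hs
    exact (aux_d1 r s hs).deriv
  rw [hev.deriv_eq, (aux_d2 r t ht1).deriv]
  -- turn rpow differences into divisions
  have e1 : Real.log t ^ (r - 1) = X / L := by
    rw [hXdef, hLdef, Real.rpow_sub hL0, Real.rpow_one]
  have e2 : Real.log t ^ (r - 1 - 1) = X / (L * L) := by
    rw [hXdef, hLdef, Real.rpow_sub hL0, Real.rpow_sub hL0, Real.rpow_one, div_div]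
  have e3 : Real.log t ^ r = X := rfl
  rw [e1, e2, e3]
  have hL0' : L ≠ 0 := ne_of_gt hL0
  have hX0' : X ≠ 0 := ne_of_gt hX0
  have ht0'' : t ≠ 0 := ne_of_gt ht0'
  -- closed form of the second derivative
  have key : (-(t⁻¹ * r * (X / L) + r * (t⁻¹ * (r - 1) * (X / (L * L)))) * (t * X) ^ 2 -
        -(X + r * (X / L)) * (2 * (t * X) ^ 1 * (1 * X + t * (t⁻¹ * r * (X / L))))) /
        ((t * X) ^ 2) ^ 2
      = (2 * L ^ 2 + 3 * r * L + r * (r + 1)) / (t ^ 3 * X * L ^ 2) := by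
    field_simp
    ring
  rw [key]
  have hlhs : 2 * β ^ 2 * (1 / (t * X)) ^ 3 = 2 * β ^ 2 / (t ^ 3 * X ^ 3) := by
    field_simp
  rw [hlhs, div_le_div_iff₀ (by positivity) (by positivity)]
  have hfac : 2 * β ^ 2 * L ^ 2 ≤ (2 * L ^ 2 + 3 * r * L + r * (r + 1)) * X ^ 2 := by
    nlinarith [sq_nonneg L, sq_nonneg X, mul_nonneg hr0 (by linarith : (0:ℝ) ≤ L), mul_nonneg hr0 hr0,
      mul_le_mul hX1 hX1 zero_le_one (by positivity : (0:ℝ) ≤ X),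
      mul_pos hL0 hL0, sq_nonneg (X - 1), sq_nonneg (L * X), sq_nonneg β,
      mul_le_mul hβ3 hβ3 hβ0.le (by norm_num : (0:ℝ) ≤ 1/3)]
  calc 2 * β ^ 2 * (t ^ 3 * X * L ^ 2) = (2 * β ^ 2 * L ^ 2) * (t ^ 3 * X) := by ring
    _ ≤ ((2 * L ^ 2 + 3 * r * L + r * (r + 1)) * X ^ 2) * (t ^ 3 * X) :=
        mul_le_mul_of_nonneg_right hfac (by positivity)
    _ = (2 * L ^ 2 + 3 * r * L + r * (r + 1)) * (t ^ 3 * X ^ 3) := by ring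
end

section
/- Let β ∈ (0,1/3), β0 ∈ [2β, 1-β), and γ : [t0,∞) → (0,∞) nonincreasing, C², with γ''(t) ≥ 2β²γ(t)³ for all t ≥ t0. With p(t) = exp(∫_{t0}^t γ), θ(t) = β0 p(t)^β γ(t), and η(t) = -β0 p(t)^{2β}((β0+2β-1)γ(t)² + γ'(t)), one has θ(t)θ'(t) + η'(t)/2 ≤ 0 for all t ≥ t0. -/
open Set


private lemma mono_aux {a : ℝ} {f f' : ℝ → ℝ}
    (hf : ∀ t ∈ Ici a, HasDerivWithinAt f (f' t) (Ici a) t)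
    (h0 : ∀ t ∈ Ici a, 0 ≤ f' t) : MonotoneOn f (Ici a) := by
  apply monotoneOn_of_hasDerivWithinAt_nonneg (f' := f') (convex_Ici a)
    (fun t ht => (hf t ht).continuousWithinAt)
  · rw [interior_Ici]
    intro x hx
    exact (hf x (mem_Ici.mpr (le_of_lt (mem_Ioi.mp hx)))).mono Ioi_subset_Ici_self
  · rw [interior_Ici]
    intro x hx
    exact h0 x (mem_Ici.mpr (le_of_lt (mem_Ioi.mp hx)))

private lemma anti_aux {a : ℝ} {f f' : ℝ → ℝ}
    (hf : ∀ t ∈ Ici a, HasDerivWithinAt f (f' t) (Ici a) t)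
    (h0 : ∀ t ∈ Ici a, f' t ≤ 0) : AntitoneOn f (Ici a) := by
  apply antitoneOn_of_hasDerivWithinAt_nonpos (f' := f') (convex_Ici a)
    (fun t ht => (hf t ht).continuousWithinAt)
  · rw [interior_Ici]
    intro x hx
    exact (hf x (mem_Ici.mpr (le_of_lt (mem_Ioi.mp hx)))).mono Ioi_subset_Ici_self
  · rw [interior_Ici]
    intro x hx
    exact h0 x (mem_Ici.mpr (le_of_lt (mem_Ioi.mp hx)))

private lemma grow_aux {a c : ℝ} {f f' : ℝ → ℝ}
    (hf : ∀ t ∈ Ici a, HasDerivWithinAt f (f' t) (Ici a) t)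
    (h0 : ∀ t ∈ Ici a, c ≤ f' t) : ∀ t ∈ Ici a, f a + c * (t - a) ≤ f t := by
  have hmono : MonotoneOn (fun t => f t - c * t) (Ici a) := by
    apply mono_aux (f' := fun t => f' t - c)
    · intro t ht
      have h1 : HasDerivWithinAt (fun t : ℝ => c * t) (c * 1) (Ici a) t :=
        ((hasDerivAt_id t).const_mul c).hasDerivWithinAt
      simpa using (hf t ht).fun_sub h1
    · intro t ht
      simpa using h0 t ht
  intro t ht
  have := hmono (mem_Ici.mpr le_rfl) ht (mem_Ici.mp ht)
  simp only at this
  linarith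

private lemma slope_nonpos_aux {t0 : ℝ} {γ γ' : ℝ → ℝ} (hanti : AntitoneOn γ (Ici t0))
    (hd1 : ∀ t ∈ Ici t0, HasDerivWithinAt γ (γ' t) (Ici t0) t) :
    ∀ t ∈ Ici t0, γ' t ≤ 0 := by
  intro t ht
  have h := hd1 t ht
  rw [hasDerivWithinAt_iff_tendsto_slope] at h
  have h2 : Filter.Tendsto (slope γ t) (nhdsWithin t (Ioi t)) (nhds (γ' t)) := by
    apply h.mono_left (nhdsWithin_mono _ _)
    intro s hs
    exact ⟨mem_Ici.mpr (le_trans (mem_Ici.mp ht) (le_of_lt (mem_Ioi.mp hs))), ne_of_gt (mem_Ioi.mp hs)⟩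
  refine le_of_tendsto h2 ?_
  filter_upwards [self_mem_nhdsWithin] with s hs
  have hst : t ≤ s := le_of_lt hs
  have h3 : γ s ≤ γ t := hanti ht (le_trans ht hst) hst
  rw [slope_def_field]
  apply div_nonpos_of_nonpos_of_nonneg <;> linarith [hs.out]

private lemma gamma_deriv_le {t0 β : ℝ} {γ γ' γ'' : ℝ → ℝ} (hβpos : 0 < β)
    (hpos : ∀ t ∈ Ici t0, 0 < γ t)
    (hanti : AntitoneOn γ (Ici t0))
    (hd1 : ∀ t ∈ Ici t0, HasDerivWithinAt γ (γ' t) (Ici t0) t)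
    (hd2 : ∀ t ∈ Ici t0, HasDerivWithinAt γ' (γ'' t) (Ici t0) t)
    (hineq : ∀ t ∈ Ici t0, 2 * β ^ 2 * γ t ^ 3 ≤ γ'' t) :
    ∀ t ∈ Ici t0, γ' t ≤ -(β * γ t ^ 2) := by
  have hγ'0 : ∀ t ∈ Ici t0, γ' t ≤ 0 := slope_nonpos_aux hanti hd1
  -- γ gets arbitrarily small
  have hsmall : ∀ ε > (0:ℝ), ∀ t1 ∈ Ici t0, ∃ s, t1 ≤ s ∧ γ s < ε := by
    intro ε hε t1 ht1
    by_contra hcon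
    push_neg at hcon
    have hc : (0:ℝ) < 2 * β ^ 2 * ε ^ 3 := by positivity
    have hgrow := grow_aux (a := t1) (c := 2 * β ^ 2 * ε ^ 3) (f := γ') (f' := γ'')
      (fun t ht => (hd2 t (mem_Ici.mpr (le_trans (mem_Ici.mp ht1) (mem_Ici.mp ht)))).mono (Ici_subset_Ici.mpr ht1))
      (fun t ht => by
        have h1 : ε ^ 3 ≤ γ t ^ 3 := pow_le_pow_left₀ hε.le (hcon t ht) 3
        have h2 := hineq t (mem_Ici.mpr (le_trans (mem_Ici.mp ht1) (mem_Ici.mp ht)))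
        nlinarith [sq_nonneg β])
    set T := t1 + (1 + |γ' t1|) / (2 * β ^ 2 * ε ^ 3) with hT
    have hT1 : t1 ≤ T := by
      have h0 : (0:ℝ) ≤ (1 + |γ' t1|) / (2 * β ^ 2 * ε ^ 3) := by positivity
      exact le_add_of_nonneg_right h0
    have h3 := hgrow T hT1
    have h4 : 2 * β ^ 2 * ε ^ 3 * (T - t1) = 1 + |γ' t1| := by
      rw [hT]
      field_simp
      ring
    have h5 := hγ'0 T (le_trans ht1 hT1)
    have h6 := neg_abs_le (γ' t1)
    linarith
  -- F is antitone
  set F : ℝ → ℝ := fun t => γ' t ^ 2 - β ^ 2 * γ t ^ 4 with hFdef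
  have hFanti : AntitoneOn F (Ici t0) := by
    apply anti_aux (f' := fun t => 2 * γ' t * γ'' t - β ^ 2 * (4 * γ t ^ 3 * γ' t))
    · intro t ht
      have h1 := ((hd2 t ht).fun_pow 2).fun_sub (((hd1 t ht).fun_pow 4).const_mul (β ^ 2))
      refine h1.congr_deriv ?_
      push_cast
      ring
    · intro t ht
      have h1 := mul_nonpos_of_nonpos_of_nonneg (hγ'0 t ht) (sub_nonneg.mpr (hineq t ht))
      nlinarith
  intro t ht
  by_contra hcontra
  push_neg at hcontra
  have hFt : F t < 0 := by
    have h1 := hγ'0 t ht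
    have h2 := hpos t ht
    simp only [hFdef]
    nlinarith
  set δ : ℝ := -(F t) with hδ
  have hδpos : 0 < δ := by linarith
  set ε : ℝ := min 1 (δ / (2 * β ^ 2)) with hε
  have hεpos : 0 < ε := lt_min one_pos (by positivity)
  obtain ⟨s, hs1, hs2⟩ := hsmall ε hεpos t ht
  have hsI : s ∈ Ici t0 := le_trans ht hs1
  have hFs : F s ≤ F t := hFanti ht hsI hs1
  have hγs := hpos s hsI
  have h4 : γ s ^ 4 < ε ^ 4 := pow_lt_pow_left₀ hs2 hγs.le (by norm_num)
  have hε1 : ε ≤ 1 := min_le_left _ _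
  have hε2 : ε ≤ δ / (2 * β ^ 2) := min_le_right _ _
  have h5 : ε ^ 4 ≤ ε := by
    have h3 : ε ^ 3 ≤ 1 := pow_le_one₀ hεpos.le hε1
    nlinarith
  have h2b : (0:ℝ) < 2 * β ^ 2 := by positivity
  have h6 : 2 * β ^ 2 * ε ≤ δ := by
    have := (le_div_iff₀ h2b).mp hε2
    linarith
  have h7 : F s ≥ -(β ^ 2 * γ s ^ 4) := by
    simp only [hFdef]
    nlinarith [sq_nonneg (γ' s)]
  have h8 := mul_lt_mul_of_pos_left h4 (show (0:ℝ) < β ^ 2 by positivity)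
  nlinarith [sq_nonneg β]

private lemma ftc_aux {t0 : ℝ} {γ : ℝ → ℝ} (hc : ContinuousOn γ (Ici t0)) :
    ∀ t ∈ Ici t0, HasDerivWithinAt (fun u => ∫ s in t0..u, γ s) (γ t) (Ici t0) t := by
  intro t ht
  have hint : IntervalIntegrable γ MeasureTheory.volume t0 t := by
    apply ContinuousOn.intervalIntegrable
    apply hc.mono
    rw [uIcc_of_le ht]
    exact Icc_subset_Ici_self
  rcases eq_or_lt_of_le (mem_Ici.mp ht : t0 ≤ t) with rfl | hlt
  · have hmeas : StronglyMeasurableAtFilter γ (nhdsWithin t0 (Ioi t0)) MeasureTheory.volume :=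
      ⟨Ici t0, Filter.mem_of_superset self_mem_nhdsWithin Ioi_subset_Ici_self,
        hc.aestronglyMeasurable measurableSet_Ici⟩
    have hcont : ContinuousWithinAt γ (Ioi t0) t0 :=
      (hc t0 (mem_Ici.mpr le_rfl)).mono Ioi_subset_Ici_self
    exact intervalIntegral.integral_hasDerivWithinAt_right hint hmeas hcont
  · have hmeas : StronglyMeasurableAtFilter γ (nhds t) MeasureTheory.volume :=
      ⟨Ici t0, Ici_mem_nhds hlt, hc.aestronglyMeasurable measurableSet_Ici⟩
    have hcont : ContinuousAt γ t := (hc t ht).continuousAt (Ici_mem_nhds hlt)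
    exact (intervalIntegral.integral_hasDerivAt_right hint hmeas hcont).hasDerivWithinAt

theorem stmt_10 (t0 β β0 : ℝ)
    (hβ : β ∈ Set.Ioo (0:ℝ) (1/3)) (hβ0 : β0 ∈ Set.Ico (2*β) (1-β))
    (γ γ' γ'' : ℝ → ℝ)
    (hpos : ∀ t ∈ Ici t0, 0 < γ t)
    (hanti : AntitoneOn γ (Ici t0))
    (hd1 : ∀ t ∈ Ici t0, HasDerivWithinAt γ (γ' t) (Ici t0) t)
    (hd2 : ∀ t ∈ Ici t0, HasDerivWithinAt γ' (γ'' t) (Ici t0) t)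
    (hc2 : ContinuousOn γ'' (Ici t0))
    (hineq : ∀ t ∈ Ici t0, 2 * β ^ 2 * γ t ^ 3 ≤ γ'' t)
    (p θ η θ' η' : ℝ → ℝ)
    (hp : ∀ t, p t = Real.exp (∫ s in t0..t, γ s))
    (hθ : ∀ t, θ t = β0 * p t ^ β * γ t)
    (hη : ∀ t, η t = -β0 * p t ^ (2*β) * ((β0 + 2*β - 1) * γ t ^ 2 + γ' t))
    (hθ' : ∀ t ∈ Ici t0, HasDerivWithinAt θ (θ' t) (Ici t0) t)
    (hη' : ∀ t ∈ Ici t0, HasDerivWithinAt η (η' t) (Ici t0) t) :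
    ∀ t ∈ Ici t0, θ t * θ' t + η' t / 2 ≤ 0 := by
  obtain ⟨hβ1, hβ2⟩ := hβ
  obtain ⟨hb0l, hb0r⟩ := hβ0
  have hβ0pos : 0 < β0 := by linarith
  have cγ : ContinuousOn γ (Ici t0) := fun s hs => (hd1 s hs).continuousWithinAt
  set P : ℝ → ℝ := fun u => ∫ s in t0..u, γ s with hPdef
  have hP : ∀ t ∈ Ici t0, HasDerivWithinAt P (γ t) (Ici t0) t := ftc_aux cγ
  have hqval : ∀ s, p s ^ β = Real.exp (P s * β) := fun s => by
    rw [hp s, Real.rpow_def_of_pos (Real.exp_pos _), Real.log_exp]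
  have hq2val : ∀ s, p s ^ (2*β) = Real.exp (P s * β) ^ 2 := fun s => by
    rw [hp s, Real.rpow_def_of_pos (Real.exp_pos _), Real.log_exp,
      show (∫ x in t0..s, γ x) * (2*β) = (2:ℕ) * (P s * β) by push_cast; ring,
      Real.exp_nat_mul]
  have hθfun : θ = fun s => β0 * (Real.exp (P s * β) * γ s) :=
    funext fun s => by rw [hθ s, hqval s]; ring
  have hηfun : η = fun s =>
      -β0 * (Real.exp (P s * β) ^ 2 * ((β0 + 2*β - 1) * γ s ^ 2 + γ' s)) :=
    funext fun s => by rw [hη s, hq2val s]; ring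
  have hγle := gamma_deriv_le hβ1 hpos hanti hd1 hd2 hineq
  intro t ht
  have hu : UniqueDiffWithinAt ℝ (Ici t0) t := uniqueDiffOn_Ici t0 t ht
  have hq' : HasDerivWithinAt (fun s => Real.exp (P s * β))
      (Real.exp (P t * β) * (γ t * β)) (Ici t0) t := ((hP t ht).mul_const β).exp
  -- θ' formula
  have Hθ : HasDerivWithinAt (fun s => β0 * (Real.exp (P s * β) * γ s))
      (β0 * (Real.exp (P t * β) * (γ t * β) * γ t + Real.exp (P t * β) * γ' t))
      (Ici t0) t := (hq'.mul (hd1 t ht)).const_mul β0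
  have hθ'eq : θ' t
      = β0 * (Real.exp (P t * β) * (γ t * β) * γ t + Real.exp (P t * β) * γ' t) := by
    have e1 := (hθ' t ht).derivWithin hu
    rw [hθfun] at e1
    have e2 := Hθ.derivWithin hu
    rw [e1] at e2
    exact e2
  -- η' formula
  have HA : HasDerivWithinAt (fun s => (β0 + 2*β - 1) * γ s ^ 2 + γ' s)
      ((β0 + 2*β - 1) * (2 * γ t * γ' t) + γ'' t) (Ici t0) t := by
    have h := (((hd1 t ht).fun_pow 2).const_mul (β0 + 2*β - 1)).fun_add (hd2 t ht)
    refine h.congr_deriv ?_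
    push_cast
    ring
  have Hq2 : HasDerivWithinAt (fun s => Real.exp (P s * β) ^ 2)
      (2 * Real.exp (P t * β) * (Real.exp (P t * β) * (γ t * β))) (Ici t0) t := by
    have h := hq'.fun_pow 2
    refine h.congr_deriv ?_
    push_cast
    ring
  have Hη : HasDerivWithinAt (fun s =>
      -β0 * (Real.exp (P s * β) ^ 2 * ((β0 + 2*β - 1) * γ s ^ 2 + γ' s)))
      (-β0 * (2 * Real.exp (P t * β) * (Real.exp (P t * β) * (γ t * β)) *
          ((β0 + 2*β - 1) * γ t ^ 2 + γ' t)
        + Real.exp (P t * β) ^ 2 * ((β0 + 2*β - 1) * (2 * γ t * γ' t) + γ'' t)))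
      (Ici t0) t := (Hq2.mul HA).const_mul (-β0)
  have hη'eq : η' t = -β0 * (2 * Real.exp (P t * β) * (Real.exp (P t * β) * (γ t * β)) *
          ((β0 + 2*β - 1) * γ t ^ 2 + γ' t)
        + Real.exp (P t * β) ^ 2 * ((β0 + 2*β - 1) * (2 * γ t * γ' t) + γ'' t)) := by
    have e1 := (hη' t ht).derivWithin hu
    rw [hηfun] at e1
    have e2 := Hη.derivWithin hu
    rw [e1] at e2
    exact e2
  -- the final inequality
  have hγt := hpos t ht
  have hgg' := hγle t ht
  have hgd := hineq t ht
  have key : θ t * θ' t + η' t / 2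
      = -(β0 * Real.exp (P t * β) ^ 2 *
          (β * (2*β - 1) * γ t ^ 3 + (3*β - 1) * (γ t * γ' t) + γ'' t / 2)) := by
    rw [hθ t, hqval t, hθ'eq, hη'eq]
    ring
  have h13 : (0:ℝ) ≤ 1 - 3*β := by linarith
  have hXle : γ t * γ' t + β * γ t ^ 3 ≤ 0 := by
    nlinarith [mul_le_mul_of_nonneg_left hgg' hγt.le]
  have hprod : 0 ≤ (1 - 3*β) * (-(γ t * γ' t + β * γ t ^ 3)) :=
    mul_nonneg h13 (by linarith)
  have hR : 0 ≤ β * (2*β - 1) * γ t ^ 3 + (3*β - 1) * (γ t * γ' t) + γ'' t / 2 := by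
    nlinarith [mul_pos (mul_pos hβ1 hβ1) (mul_pos hγt (mul_pos hγt hγt))]
  rw [key]
  have hE : (0:ℝ) ≤ β0 * Real.exp (P t * β) ^ 2 := by positivity
  exact neg_nonpos_of_nonneg (mul_nonneg hE hR)
end

section
/- Let γ : [t0,∞) → (0,∞) be nonincreasing, C², with γ''(t) ≥ 2β²γ(t)³ for some β ∈ (0,1/3), β0 ∈ [2β,1-β), δ(t) = 1/(β0γ(t)), and p(t) = exp(∫_{t0}^t γ). Suppose (x,y,λ) : [t0,T) → ℝ^{n1}×ℝ^{n2}×ℝ^m solves the C² system ẍ + γẋ = -∇f(x) - Aᵀ(λ+δλ̇) - Aᵀ(Ax+By-b), ÿ + γẏ = -∇g(y) - Bᵀ(λ+δλ̇) - Bᵀ(Ax+By-b), λ̈ + γλ̇ = A(x+δẋ)+B(y+δẏ)-b, where f, g are convex differentiable and (x*,y*,λ*) is a KKT point. Then with θ(t) = β0 p(t)^β γ(t), η(t) = -β0 p(t)^{2β}((β0+2β-1)γ(t)²+γ'(t)), the energy E(t) = p(t)^{2β}(L(x(t),y(t),λ*)-L(x*,y*,λ*)) + (1/2)‖θ(t)(x(t)-x*)+p(t)^βẋ(t)‖²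 + (η(t)/2)‖x(t)-x*‖² + (1/2)‖θ(t)(y(t)-y*)+p(t)^βẏ(t)‖² + (η(t)/2)‖y(t)-y*‖² + (1/2)‖θ(t)(λ(t)-λ*)+p(t)^βλ̇(t)‖² + (η(t)/2)‖λ(t)-λ*‖² is nonincreasing on [t0,T). -/
open Set MeasureTheory

local notation "⟪" x ", " y "⟫" => @inner ℝ _ _ x y

section Aux

lemma aux_convex_grad {n : ℕ} (f : EuclideanSpace ℝ (Fin n) → ℝ)
    (hfc : ConvexOn ℝ univ f) (hfd : Differentiable ℝ f)
    (z w : EuclideanSpace ℝ (Fin n)) :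
    f z + ⟪gradient f z, w - z⟫ ≤ f w := by
  set φ : ℝ → ℝ := fun s => f (z + s • (w - z)) with hφ
  have hline : ∀ s : ℝ, HasDerivAt (fun s : ℝ => z + s • (w - z)) (w - z) s := by
    intro s
    simpa using ((hasDerivAt_id s).smul_const (w - z)).const_add z
  have hφd : ∀ s : ℝ, HasDerivAt φ ⟪gradient f (z + s • (w - z)), w - z⟫ s := by
    intro s
    have h1 := ((hfd (z + s • (w - z))).hasGradientAt.hasFDerivAt).comp_hasDerivAt s (hline s)
    exact h1.congr_deriv (by simp [InnerProductSpace.toDual_apply_apply])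
  have hφc : ConvexOn ℝ univ φ := by
    have := hfc.comp_affineMap (AffineMap.lineMap z w : ℝ →ᵃ[ℝ] EuclideanSpace ℝ (Fin n))
    have heq : φ = f ∘ (AffineMap.lineMap z w : ℝ →ᵃ[ℝ] EuclideanSpace ℝ (Fin n)) := by
      funext s
      simp [hφ, AffineMap.lineMap_apply, vsub_eq_sub, vadd_eq_add]
      congr 1
      abel
    rw [heq]
    simpa using this
  have hslope := hφc.le_slope_of_hasDerivAt (mem_univ (0:ℝ)) (mem_univ (1:ℝ)) one_pos (hφd 0)
  have h0 : φ 0 = f z := by simp [hφ]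
  have h1 : φ 1 = f w := by simp [hφ]
  rw [slope_def_field] at hslope
  simp [h0, h1] at hslope
  simpa [h0] using by linarith [hslope]

lemma aux_deriv_nonpos' {t0 : ℝ} {γ : ℝ → ℝ} {d t : ℝ}
    (hanti : AntitoneOn γ (Ici t0) ) (ht : t0 ≤ t)
    (hd : HasDerivAt γ d t) : d ≤ 0 := by
  have htend : Filter.Tendsto (slope γ t) (nhdsWithin t (Ioi t)) (nhds d) :=
    (hasDerivAt_iff_tendsto_slope.1 hd).mono_left
      (nhdsWithin_mono t (fun s hs => by simpa using (ne_of_gt hs)))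
  refine le_of_tendsto htend ?_
  filter_upwards [self_mem_nhdsWithin] with s hs
  have hs' : t < s := hs
  have h1 : γ s ≤ γ t := hanti (mem_Ici.2 ht) (mem_Ici.2 (le_trans ht hs'.le)) hs'.le
  rw [slope_def_field]
  exact div_nonpos_of_nonpos_of_nonneg (by linarith) (by linarith)

set_option maxHeartbeats 1000000 in
lemma aux_gamma_key (t0 β : ℝ) (hβ : 0 < β) (γ γ' γ'' : ℝ → ℝ)
    (hγpos : ∀ t ∈ Ici t0, 0 < γ t)
    (hγanti : AntitoneOn γ (Ici t0))
    (hγd1 : ∀ t ∈ Ici t0, HasDerivWithinAt γ (γ' t) (Ici t0) t)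
    (hγd2 : ∀ t ∈ Ici t0, HasDerivWithinAt γ' (γ'' t) (Ici t0) t)
    (hγineq : ∀ t ∈ Ici t0, 2 * β ^ 2 * γ t ^ 3 ≤ γ'' t)
    {t1 : ℝ} (ht1 : t0 < t1) : γ' t1 + β * γ t1 ^ 2 ≤ 0 := by
  have hγD : ∀ t, t0 < t → HasDerivAt γ (γ' t) t :=
    fun t h => (hγd1 t h.le).hasDerivAt (Ici_mem_nhds h)
  have hγ'D : ∀ t, t0 < t → HasDerivAt γ' (γ'' t) t :=
    fun t h => (hγd2 t h.le).hasDerivAt (Ici_mem_nhds h)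
  have hγcont : ContinuousOn γ (Ici t0) :=
    fun t ht => (hγd1 t ht).differentiableWithinAt.continuousWithinAt
  set I : ℝ → ℝ := fun u => ∫ s in t0..u, γ s with hIdef
  have hID : ∀ u, t0 < u → HasDerivAt I (γ u) u := by
    intro u hu
    refine intervalIntegral.integral_hasDerivAt_right ?_ ?_
      ((hγcont u hu.le).continuousAt (Ici_mem_nhds hu))
    · exact (hγcont.mono (by rw [uIcc_of_le hu.le]; exact Icc_subset_Ici_self)).intervalIntegrable
    · exact ⟨Ici t0, Ici_mem_nhds hu, hγcont.aestronglyMeasurable measurableSet_Ici⟩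
  by_contra hcon
  push_neg at hcon
  set h : ℝ → ℝ := fun u => γ' u + β * γ u ^ 2 with hhdef
  have hh1 : 0 < h t1 := hcon
  set k : ℝ → ℝ := fun u => h u * Real.exp (-(2*β) * I u) with hkdef
  have hkD : ∀ u, t0 < u → HasDerivAt k
      ((γ'' u - 2 * β ^ 2 * γ u ^ 3) * Real.exp (-(2*β) * I u)) u := by
    intro u hu
    have h1 : HasDerivAt h (γ'' u + β * (↑2 * γ u ^ 1 * γ' u)) u :=
      (hγ'D u hu).add (((hγD u hu).pow 2).const_mul β)
    have h2 : HasDerivAt (fun v => Real.exp (-(2*β) * I v))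
        (Real.exp (-(2*β) * I u) * (-(2*β) * γ u)) u := by
      have := ((hID u hu).const_mul (-(2*β))).exp
      simpa using this
    have := h1.mul h2
    refine this.congr_deriv ?_
    simp only [hhdef]
    ring
  -- k is monotone on Ici t1
  have hkmono : MonotoneOn k (Ici t1) := by
    refine monotoneOn_of_deriv_nonneg (convex_Ici t1)
      (fun u hu => (hkD u (lt_of_lt_of_le ht1 hu)).continuousAt.continuousWithinAt)
      (fun u hu => ((hkD u (by rw [interior_Ici] at hu; exact lt_trans ht1 hu)).differentiableAt).differentiableWithinAt)
      ?_
    intro u hu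
    rw [interior_Ici] at hu
    rw [(hkD u (lt_trans ht1 hu)).deriv]
    have := hγineq u (le_of_lt (lt_trans ht1 hu))
    have := Real.exp_pos (-(2*β) * I u)
    nlinarith
  -- consequence: exponential growth of h
  have hht : ∀ t, t1 ≤ t → h t1 * Real.exp ((2*β) * (I t - I t1)) ≤ h t := by
    intro t ht
    have hm := hkmono (self_mem_Ici) (mem_Ici.2 ht) ht
    have e1 : h t1 * Real.exp ((2*β) * (I t - I t1))
        = (h t1 * Real.exp (-(2*β) * I t1)) * Real.exp ((2*β) * I t) := by
      conv_rhs => rw [mul_assoc, ← Real.exp_add]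
      congr 1
      ring
    have e2 : (h t * Real.exp (-(2*β) * I t)) * Real.exp ((2*β) * I t) = h t := by
      conv_lhs => rw [mul_assoc, ← Real.exp_add]
      rw [show -(2*β) * I t + (2*β) * I t = 0 by ring, Real.exp_zero, mul_one]
    calc h t1 * Real.exp ((2*β) * (I t - I t1))
        = (h t1 * Real.exp (-(2*β) * I t1)) * Real.exp ((2*β) * I t) := e1
      _ ≤ (h t * Real.exp (-(2*β) * I t)) * Real.exp ((2*β) * I t) :=
          mul_le_mul_of_nonneg_right hm (Real.exp_nonneg _)
      _ = h t := e2
  have hhpos : ∀ t, t1 ≤ t → 0 < h t := by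
    intro t ht
    exact lt_of_lt_of_le (by positivity) (hht t ht)
  have hγpos1 : 0 < γ t1 := hγpos t1 ht1.le
  obtain ⟨c, hcdef⟩ : ∃ c : ℝ, c = 1 / γ t1 - β * t1 := ⟨_, rfl⟩
  obtain ⟨K, hKdef⟩ : ∃ K : ℝ, K = 1 / γ t1 := ⟨_, rfl⟩
  have hK : 0 < K := by rw [hKdef]; positivity
  have hcK : c + β * t1 = K := by rw [hcdef, hKdef]; ring
  have hmono2 : AntitoneOn (fun u => 1 / γ u - β * u) (Ici t1) := by
    have hder : ∀ u, t1 < u → HasDerivAt (fun v => 1 / γ v - β * v)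
        (-γ' u / γ u ^ 2 - β) u := by
      intro u hu
      have hu' : t0 < u := lt_trans ht1 hu
      have h1 : HasDerivAt (fun v => 1 / γ v) (-γ' u / γ u ^ 2) u := by
        simp only [one_div]; exact (hγD u hu').inv (ne_of_gt (hγpos u hu'.le))
      refine (h1.sub ((hasDerivAt_id u).const_mul β)).congr_deriv ?_; simp
    refine antitoneOn_of_deriv_nonpos (convex_Ici t1) ?_ ?_ ?_
    · intro u hu
      have hu'' : t0 < u := lt_of_lt_of_le ht1 hu
      have h1 : HasDerivAt (fun v => 1 / γ v) (-γ' u / γ u ^ 2) u := by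
        simp only [one_div]; exact (hγD u hu'').inv (ne_of_gt (hγpos u hu''.le))
      exact ((h1.sub ((hasDerivAt_id u).const_mul β)).continuousAt).continuousWithinAt
    · intro u hu
      rw [interior_Ici] at hu
      exact (hder u hu).differentiableAt.differentiableWithinAt
    · intro u hu
      rw [interior_Ici] at hu
      rw [(hder u hu).deriv]
      have hpos := hγpos u (lt_trans ht1 hu).le
      have hh := hhpos u hu.le
      simp only [hhdef] at hh
      have h2 : -γ' u / γ u ^ 2 ≤ β := by
        rw [div_le_iff₀ (by positivity)]
        nlinarith
      linarith
  have hγlb : ∀ t, t1 ≤ t → 1 / (c + β * t) ≤ γ t ∧ 0 < c + β * t := by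
    intro t ht
    have hmt := hmono2 self_mem_Ici (mem_Ici.2 ht) ht
    simp only at hmt
    have hpos : 0 < c + β * t := by
      have h4 : β * t1 ≤ β * t := by nlinarith
      have : K ≤ c + β * t := by linarith [hcK]
      linarith
    refine ⟨?_, hpos⟩
    have hγt := hγpos t (le_trans ht1.le ht)
    have h3 : 1 / γ t ≤ c + β * t := by rw [hcdef]; linarith
    rw [div_le_iff₀ hγt] at h3
    rw [div_le_iff₀ hpos]
    nlinarith
  have hmono3 : MonotoneOn (fun u => I u - (1/β) * Real.log (c + β * u)) (Ici t1) := by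
    have hder : ∀ u, t1 ≤ u → HasDerivAt (fun v => I v - (1/β) * Real.log (c + β * v))
        (γ u - (1/β) * ((c + β * u)⁻¹ * β)) u := by
      intro u hu
      have hu' : t0 < u := lt_of_lt_of_le ht1 hu
      have hpos := (hγlb u hu).2
      have h2 : HasDerivAt (fun v => c + β * v) β u := by
        simpa using ((hasDerivAt_id u).const_mul β).const_add c
      have h1 : HasDerivAt (fun v => Real.log (c + β * v)) ((c + β * u)⁻¹ * β) u :=
        ((Real.hasDerivAt_log (ne_of_gt hpos)).comp u h2 :)
      exact (hID u hu').sub (h1.const_mul (1/β))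
    refine monotoneOn_of_deriv_nonneg (convex_Ici t1)
      (fun u hu => (hder u hu).continuousAt.continuousWithinAt)
      (fun u hu => (hder u (by rw [interior_Ici] at hu; exact hu.le)).differentiableAt.differentiableWithinAt)
      ?_
    intro u hu
    rw [interior_Ici] at hu
    rw [(hder u hu.le).deriv]
    have hpos := (hγlb u hu.le).2
    have hlb := (hγlb u hu.le).1
    have he : (1/β) * ((c + β * u)⁻¹ * β) = 1 / (c + β * u) := by
      field_simp
    rw [he]
    linarith
  obtain ⟨M, hMdef⟩ : ∃ M : ℝ, M = β * γ t1 ^ 2 := ⟨_, rfl⟩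
  have hM : 0 ≤ M := by rw [hMdef]; positivity
  obtain ⟨s0, hs0def⟩ : ∃ s0 : ℝ, s0 = (M * K ^ 2 + 1) / h t1 + K + 1 := ⟨_, rfl⟩
  have hs0 : 1 ≤ s0 := by
    have h5 : 0 ≤ (M * K ^ 2 + 1) / h t1 := by positivity
    rw [hs0def]; linarith
  obtain ⟨t2, ht2def⟩ : ∃ t2 : ℝ, t2 = t1 + s0 / β := ⟨_, rfl⟩
  have ht2 : t1 ≤ t2 := by
    have h5 : 0 < s0 / β := by positivity
    rw [ht2def]; linarith
  have hct2 : c + β * t2 = K + s0 := by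
    rw [ht2def, ← hcK]
    field_simp
    ring
  have hub : h t2 ≤ M := by
    simp only [hhdef, hMdef]
    have h1 : γ' t2 ≤ 0 := aux_deriv_nonpos' hγanti (le_trans ht1.le ht2)
      (hγD t2 (lt_of_lt_of_le ht1 ht2))
    have h2 : γ t2 ≤ γ t1 := hγanti ht1.le (le_trans ht1.le ht2) ht2
    have h3 : 0 < γ t2 := hγpos t2 (le_trans ht1.le ht2)
    have h4 : γ t2 ^ 2 ≤ γ t1 ^ 2 := by nlinarith
    nlinarith
  have hIlb : Real.log (c + β * t2) - Real.log K ≤ β * (I t2 - I t1) := by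
    have hmt := hmono3 self_mem_Ici (mem_Ici.2 ht2) ht2
    simp only at hmt
    rw [hcK] at hmt
    have h5 : β * (I t1 - 1/β * Real.log K) = β * I t1 - Real.log K := by
      field_simp
    have h6 : β * (I t2 - 1/β * Real.log (c + β * t2)) = β * I t2 - Real.log (c + β * t2) := by
      field_simp
    have h7 := mul_le_mul_of_nonneg_left hmt hβ.le
    rw [h5, h6] at h7
    linarith
  have hexp : ((K + s0) / K) ^ 2 ≤ Real.exp ((2*β) * (I t2 - I t1)) := by
    have h1 : 2 * (Real.log (c + β * t2) - Real.log K) ≤ (2*β) * (I t2 - I t1) := by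
      linarith
    have h2 : ((K + s0) / K) ^ 2
        = Real.exp (2 * (Real.log (c + β * t2) - Real.log K)) := by
      rw [two_mul, Real.exp_add, Real.exp_sub,
        Real.exp_log (by rw [hct2]; positivity), Real.exp_log hK, hct2]
      ring
    rw [h2]
    exact Real.exp_le_exp.2 h1
  have hlb2 : h t1 * ((K + s0) / K) ^ 2 ≤ h t2 :=
    le_trans (mul_le_mul_of_nonneg_left hexp hh1.le) (hht t2 ht2)
  have hfin : h t1 * (K + s0) ^ 2 ≤ M * K ^ 2 := by
    have h8 := le_trans hlb2 hub
    rw [div_pow] at h8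
    have h9 : h t1 * ((K + s0) ^ 2 / K ^ 2) * K ^ 2 ≤ M * K ^ 2 :=
      mul_le_mul_of_nonneg_right h8 (by positivity)
    calc h t1 * (K + s0) ^ 2 = h t1 * ((K + s0) ^ 2 / K ^ 2) * K ^ 2 := by
          field_simp
      _ ≤ M * K ^ 2 := h9
  have he1 : h t1 * s0 = M * K ^ 2 + 1 + (K + 1) * h t1 := by
    rw [hs0def]
    field_simp
    ring
  have hq1 : h t1 * s0 ≤ h t1 * s0 ^ 2 := by
    have hb1 := mul_nonneg (mul_nonneg hh1.le (show (0:ℝ) ≤ s0 by linarith))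
      (show (0:ℝ) ≤ s0 - 1 by linarith)
    nlinarith only [hb1]
  have hq2 : h t1 * s0 ^ 2 ≤ h t1 * (K + s0) ^ 2 := by
    have hb2 := mul_nonneg hh1.le (sq_nonneg K)
    have hb3 := mul_nonneg (mul_nonneg hh1.le hK.le) (show (0:ℝ) ≤ s0 by linarith)
    nlinarith only [hb2, hb3]
  have hq3 : 0 < (K + 1) * h t1 := mul_pos (by linarith) hh1
  linarith only [he1, hfin, hq1, hq2, hq3]

set_option maxHeartbeats 3200000 in
set_option maxRecDepth 100000 in
lemma aux_identity {n1 n2 m : ℕ}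
    (A : EuclideanSpace ℝ (Fin n1) →L[ℝ] EuclideanSpace ℝ (Fin m))
    (B : EuclideanSpace ℝ (Fin n2) →L[ℝ] EuclideanSpace ℝ (Fin m))
    (X XS X1 GF : EuclideanSpace ℝ (Fin n1))
    (Y YS Y1 GG : EuclideanSpace ℝ (Fin n2))
    (Λ LS Λ1 bb : EuclideanSpace ℝ (Fin m))
    (β β0 a a' a'' rr f1 f2 g1 g2 : ℝ)
    (hne : β0 * a ≠ 0) (hb : A XS + B YS = bb) :
    2 * β * a * rr ^ 2 * (f1 + g1 + ⟪LS, A X + B Y - bb⟫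
        + (1/2) * ⟪A X + B Y - bb, A X + B Y - bb⟫ - (f2 + g2))
      + rr ^ 2 * (⟪GF, X1⟫ + ⟪GG, Y1⟫
        + ⟪LS, A X1 + B Y1⟫
        + (1/2) * (⟪A X + B Y - bb, A X1 + B Y1⟫
          + ⟪A X1 + B Y1, A X + B Y - bb⟫))
      + (1/2) * (⟪(β0 * rr * a) • (X - XS) + rr • X1,
            ((β0 * rr * a) • X1
              + (β0 * (β * a * rr) * a + β0 * rr * a') • (X - XS))
            + (rr • (-GF - ContinuousLinearMap.adjoint A (Λ + (1/(β0 * a)) • Λ1)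
            - ContinuousLinearMap.adjoint A (A X + B Y - bb) - a • X1) + (β * a * rr) • X1)⟫
          + ⟪((β0 * rr * a) • X1
              + (β0 * (β * a * rr) * a + β0 * rr * a') • (X - XS))
            + (rr • (-GF - ContinuousLinearMap.adjoint A (Λ + (1/(β0 * a)) • Λ1)
            - ContinuousLinearMap.adjoint A (A X + B Y - bb) - a • X1) + (β * a * rr) • X1),
            (β0 * rr * a) • (X - XS) + rr • X1⟫)
      + ((-β0 * (2 * β * a * rr ^ 2 * ((β0 + 2*β - 1) * a ^ 2 + a')
          + rr ^ 2 * (2 * (β0 + 2*β - 1) * a * a' + a''))) / 2 * ⟪X - XS, X - XS⟫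
        + (-β0 * rr ^ 2 * ((β0 + 2*β - 1) * a ^ 2 + a') / 2)
          * (⟪X - XS, X1⟫ + ⟪X1, X - XS⟫))
      + (1/2) * (⟪(β0 * rr * a) • (Y - YS) + rr • Y1,
            ((β0 * rr * a) • Y1
              + (β0 * (β * a * rr) * a + β0 * rr * a') • (Y - YS))
            + (rr • (-GG - ContinuousLinearMap.adjoint B (Λ + (1/(β0 * a)) • Λ1)
            - ContinuousLinearMap.adjoint B (A X + B Y - bb) - a • Y1) + (β * a * rr) • Y1)⟫
          + ⟪((β0 * rr * a) • Y1
              + (β0 * (β * a * rr) * a + β0 * rr * a') • (Y - YS))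
            + (rr • (-GG - ContinuousLinearMap.adjoint B (Λ + (1/(β0 * a)) • Λ1)
            - ContinuousLinearMap.adjoint B (A X + B Y - bb) - a • Y1) + (β * a * rr) • Y1),
            (β0 * rr * a) • (Y - YS) + rr • Y1⟫)
      + ((-β0 * (2 * β * a * rr ^ 2 * ((β0 + 2*β - 1) * a ^ 2 + a')
          + rr ^ 2 * (2 * (β0 + 2*β - 1) * a * a' + a''))) / 2 * ⟪Y - YS, Y - YS⟫
        + (-β0 * rr ^ 2 * ((β0 + 2*β - 1) * a ^ 2 + a') / 2)
          * (⟪Y - YS, Y1⟫ + ⟪Y1, Y - YS⟫))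
      + (1/2) * (⟪(β0 * rr * a) • (Λ - LS) + rr • Λ1,
            ((β0 * rr * a) • Λ1
              + (β0 * (β * a * rr) * a + β0 * rr * a') • (Λ - LS))
            + (rr • (A (X + (1/(β0 * a)) • X1) + B (Y + (1/(β0 * a)) • Y1) - bb - a • Λ1) + (β * a * rr) • Λ1)⟫
          + ⟪((β0 * rr * a) • Λ1
              + (β0 * (β * a * rr) * a + β0 * rr * a') • (Λ - LS))
            + (rr • (A (X + (1/(β0 * a)) • X1) + B (Y + (1/(β0 * a)) • Y1) - bb - a • Λ1) + (β * a * rr) • Λ1),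
            (β0 * rr * a) • (Λ - LS) + rr • Λ1⟫)
      + ((-β0 * (2 * β * a * rr ^ 2 * ((β0 + 2*β - 1) * a ^ 2 + a')
          + rr ^ 2 * (2 * (β0 + 2*β - 1) * a * a' + a''))) / 2 * ⟪Λ - LS, Λ - LS⟫
        + (-β0 * rr ^ 2 * ((β0 + 2*β - 1) * a ^ 2 + a') / 2)
          * (⟪Λ - LS, Λ1⟫ + ⟪Λ1, Λ - LS⟫))
    = 2*β*a*rr^2 * (f1 + g1 + ⟪LS, A X + B Y - bb⟫ + (1/2) * ⟪A X + B Y - bb, A X + B Y - bb⟫ - (f2 + g2))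
        - β0*a*rr^2 * (⟪GF, X - XS⟫ + ⟪GG, Y - YS⟫ + ⟪LS, A X + B Y - bb⟫ + ⟪A X + B Y - bb, A X + B Y - bb⟫)
        + (β0^2*β*rr^2*a^3 + β0^2*rr^2*a*a' + (-β0 * (2 * β * a * rr ^ 2 * ((β0 + 2*β - 1) * a ^ 2 + a') + rr ^ 2 * (2 * (β0 + 2*β - 1) * a * a' + a''))) / 2) * (⟪X - XS, X - XS⟫ + ⟪Y - YS, Y - YS⟫ + ⟪Λ - LS, Λ - LS⟫)
        + (β0+β-1)*a*rr^2 * (⟪X1, X1⟫ + ⟪Y1, Y1⟫ + ⟪Λ1, Λ1⟫) := by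
  rw [← hb]
  simp only [map_add, map_sub, _root_.map_smul, inner_add_left, inner_add_right,
    inner_sub_left, inner_sub_right, inner_neg_left, inner_neg_right,
    real_inner_smul_left, real_inner_smul_right,
    ContinuousLinearMap.adjoint_inner_left, ContinuousLinearMap.adjoint_inner_right,
    smul_add, smul_sub, smul_smul]
  simp only [real_inner_comm (A XS) (A X),
        real_inner_comm (A X1) (A X),
        real_inner_comm (B Y) (A X),
        real_inner_comm (B YS) (A X),
        real_inner_comm (B Y1) (A X),
        real_inner_comm (Λ) (A X),
        real_inner_comm (LS) (A X),
        real_inner_comm (Λ1) (A X),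
        real_inner_comm (A X1) (A XS),
        real_inner_comm (B Y) (A XS),
        real_inner_comm (B YS) (A XS),
        real_inner_comm (B Y1) (A XS),
        real_inner_comm (Λ) (A XS),
        real_inner_comm (LS) (A XS),
        real_inner_comm (Λ1) (A XS),
        real_inner_comm (B Y) (A X1),
        real_inner_comm (B YS) (A X1),
        real_inner_comm (B Y1) (A X1),
        real_inner_comm (Λ) (A X1),
        real_inner_comm (LS) (A X1),
        real_inner_comm (Λ1) (A X1),
        real_inner_comm (B YS) (B Y),
        real_inner_comm (B Y1) (B Y),
        real_inner_comm (Λ) (B Y),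
        real_inner_comm (LS) (B Y),
        real_inner_comm (Λ1) (B Y),
        real_inner_comm (B Y1) (B YS),
        real_inner_comm (Λ) (B YS),
        real_inner_comm (LS) (B YS),
        real_inner_comm (Λ1) (B YS),
        real_inner_comm (Λ) (B Y1),
        real_inner_comm (LS) (B Y1),
        real_inner_comm (Λ1) (B Y1),
        real_inner_comm (LS) (Λ),
        real_inner_comm (Λ1) (Λ),
        real_inner_comm (Λ1) (LS),
        real_inner_comm (XS) (X),
        real_inner_comm (X1) (X),
        real_inner_comm (GF) (X),
        real_inner_comm (X1) (XS),
        real_inner_comm (GF) (XS),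
        real_inner_comm (GF) (X1),
        real_inner_comm (YS) (Y),
        real_inner_comm (Y1) (Y),
        real_inner_comm (GG) (Y),
        real_inner_comm (Y1) (YS),
        real_inner_comm (GG) (YS),
        real_inner_comm (GG) (Y1)]
  have hh1 : β0 ≠ 0 := left_ne_zero_of_mul hne
  have hh2 : a ≠ 0 := right_ne_zero_of_mul hne
  field_simp
  ring

end Aux

set_option maxHeartbeats 1600000 in
theorem stmt_17 (n1 n2 m : ℕ) (t0 T β β0 : ℝ)
    (hβ : β ∈ Set.Ioo (0:ℝ) (1/3)) (hβ0 : β0 ∈ Set.Ico (2*β) (1-β))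
    (γ γ' γ'' δ p θ η : ℝ → ℝ)
    (hγpos : ∀ t ∈ Ici t0, 0 < γ t)
    (hγanti : AntitoneOn γ (Ici t0))
    (hγd1 : ∀ t ∈ Ici t0, HasDerivWithinAt γ (γ' t) (Ici t0) t)
    (hγd2 : ∀ t ∈ Ici t0, HasDerivWithinAt γ' (γ'' t) (Ici t0) t)
    (hγc : ContinuousOn γ'' (Ici t0))
    (hγineq : ∀ t ∈ Ici t0, 2 * β ^ 2 * γ t ^ 3 ≤ γ'' t)
    (hδ : ∀ t, δ t = 1 / (β0 * γ t))
    (hp : ∀ t, p t = Real.exp (∫ s in t0..t, γ s))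
    (hθ : ∀ t, θ t = β0 * p t ^ β * γ t)
    (hη : ∀ t, η t = -β0 * p t ^ (2*β) * ((β0 + 2*β - 1) * γ t ^ 2 + γ' t))
    (f : EuclideanSpace ℝ (Fin n1) → ℝ) (g : EuclideanSpace ℝ (Fin n2) → ℝ)
    (hfc : ConvexOn ℝ univ f) (hgc : ConvexOn ℝ univ g)
    (hfd : Differentiable ℝ f) (hgd : Differentiable ℝ g)
    (A : EuclideanSpace ℝ (Fin n1) →L[ℝ] EuclideanSpace ℝ (Fin m))
    (B : EuclideanSpace ℝ (Fin n2) →L[ℝ] EuclideanSpace ℝ (Fin m))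
    (b : EuclideanSpace ℝ (Fin m))
    (xs : EuclideanSpace ℝ (Fin n1)) (ys : EuclideanSpace ℝ (Fin n2))
    (ls : EuclideanSpace ℝ (Fin m))
    (hkkt1 : -(ContinuousLinearMap.adjoint A ls) = gradient f xs)
    (hkkt2 : -(ContinuousLinearMap.adjoint B ls) = gradient g ys)
    (hkkt3 : A xs + B ys = b)
    (L : EuclideanSpace ℝ (Fin n1) → EuclideanSpace ℝ (Fin n2) →
      EuclideanSpace ℝ (Fin m) → ℝ)
    (hL : ∀ x y l, L x y l =
      f x + g y + (inner ℝ l (A x + B y - b) : ℝ) + (1/2) * ‖A x + B y - b‖ ^ 2)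
    (x x' x'' : ℝ → EuclideanSpace ℝ (Fin n1))
    (y y' y'' : ℝ → EuclideanSpace ℝ (Fin n2))
    (l l' l'' : ℝ → EuclideanSpace ℝ (Fin m))
    (hx1 : ∀ t ∈ Ico t0 T, HasDerivWithinAt x (x' t) (Ico t0 T) t)
    (hx2 : ∀ t ∈ Ico t0 T, HasDerivWithinAt x' (x'' t) (Ico t0 T) t)
    (hy1 : ∀ t ∈ Ico t0 T, HasDerivWithinAt y (y' t) (Ico t0 T) t)
    (hy2 : ∀ t ∈ Ico t0 T, HasDerivWithinAt y' (y'' t) (Ico t0 T) t)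
    (hl1 : ∀ t ∈ Ico t0 T, HasDerivWithinAt l (l' t) (Ico t0 T) t)
    (hl2 : ∀ t ∈ Ico t0 T, HasDerivWithinAt l' (l'' t) (Ico t0 T) t)
    (hxc : ContinuousOn x'' (Ico t0 T)) (hyc : ContinuousOn y'' (Ico t0 T))
    (hlc : ContinuousOn l'' (Ico t0 T))
    (hodex : ∀ t ∈ Ico t0 T, x'' t + γ t • x' t =
      -gradient f (x t) - ContinuousLinearMap.adjoint A (l t + δ t • l' t)
        - ContinuousLinearMap.adjoint A (A (x t) + B (y t) - b))
    (hodey : ∀ t ∈ Ico t0 T, y'' t + γ t • y' t =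
      -gradient g (y t) - ContinuousLinearMap.adjoint B (l t + δ t • l' t)
        - ContinuousLinearMap.adjoint B (A (x t) + B (y t) - b))
    (hodel : ∀ t ∈ Ico t0 T, l'' t + γ t • l' t =
      A (x t + δ t • x' t) + B (y t + δ t • y' t) - b)
    (E : ℝ → ℝ)
    (hE : ∀ t, E t = p t ^ (2*β) * (L (x t) (y t) ls - L xs ys ls)
      + (1/2) * ‖θ t • (x t - xs) + p t ^ β • x' t‖ ^ 2 + (η t / 2) * ‖x t - xs‖ ^ 2
      + (1/2) * ‖θ t • (y t - ys) + p t ^ β • y' t‖ ^ 2 + (η t / 2) * ‖y t - ys‖ ^ 2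
      + (1/2) * ‖θ t • (l t - ls) + p t ^ β • l' t‖ ^ 2 + (η t / 2) * ‖l t - ls‖ ^ 2) :
    AntitoneOn E (Ico t0 T) := by
  obtain ⟨hβpos, hβlt⟩ := hβ
  obtain ⟨hβ0l, hβ0r⟩ := hβ0
  have hβ0pos : 0 < β0 := lt_of_lt_of_le (by linarith) hβ0l
  -- the integral of γ and the function r = p^β
  have hγcont : ContinuousOn γ (Ici t0) :=
    fun u hu => (hγd1 u hu).differentiableWithinAt.continuousWithinAt
  have hγ'cont : ContinuousOn γ' (Ici t0) :=
    fun u hu => (hγd2 u hu).differentiableWithinAt.continuousWithinAt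
  set I : ℝ → ℝ := fun u => ∫ s in t0..u, γ s with hIdef
  have hID : ∀ u, t0 < u → HasDerivAt I (γ u) u := by
    intro u hu
    refine intervalIntegral.integral_hasDerivAt_right ?_ ?_
      ((hγcont u hu.le).continuousAt (Ici_mem_nhds hu))
    · exact (hγcont.mono (by rw [uIcc_of_le hu.le]; exact Icc_subset_Ici_self)).intervalIntegrable
    · exact ⟨Ici t0, Ici_mem_nhds hu, hγcont.aestronglyMeasurable measurableSet_Ici⟩
  have hI0 : HasDerivWithinAt I (γ t0) (Ici t0) t0 := by
    refine intervalIntegral.integral_hasDerivWithinAt_right (t := Ioi t0) ?_ ?_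
      ((hγcont t0 self_mem_Ici).mono (fun s hs => mem_Ici.2 (le_of_lt hs)))
    · exact IntervalIntegrable.refl
    · exact ⟨Ici t0, Filter.mem_of_superset self_mem_nhdsWithin (fun s hs => mem_Ici.2 (le_of_lt hs)),
        hγcont.aestronglyMeasurable measurableSet_Ici⟩
  have hIcont : ContinuousOn I (Ici t0) := by
    intro u hu
    rcases eq_or_lt_of_le (mem_Ici.1 hu) with heq | hlt
    · rw [← heq]; exact hI0.continuousWithinAt
    · exact (hID u hlt).continuousAt.continuousWithinAt
  set r : ℝ → ℝ := fun u => Real.exp (β * I u) with hrdef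
  have hrpos : ∀ u, 0 < r u := fun u => Real.exp_pos _
  have hp1 : ∀ u, p u ^ β = r u := by
    intro u
    rw [hp u, Real.rpow_def_of_pos (Real.exp_pos _), Real.log_exp, mul_comm]
  have hp2 : ∀ u, p u ^ (2*β) = r u ^ 2 := by
    intro u
    rw [hp u, Real.rpow_def_of_pos (Real.exp_pos _), Real.log_exp, sq, ← Real.exp_add]
    congr 1
    ring
  have hc0 : L xs ys ls = f xs + g ys := by
    rw [hL, hkkt3]
    simp
  -- rewrite E in a convenient form
  have hEeq : E = fun u =>
      r u ^ 2 * (f (x u) + g (y u) + ⟪ls, A (x u) + B (y u) - b⟫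
        + (1/2) * ⟪A (x u) + B (y u) - b, A (x u) + B (y u) - b⟫ - (f xs + g ys))
      + (1/2) * ⟪(β0 * r u * γ u) • (x u - xs) + r u • x' u,
          (β0 * r u * γ u) • (x u - xs) + r u • x' u⟫
      + (-β0 * r u ^ 2 * ((β0 + 2*β - 1) * γ u ^ 2 + γ' u) / 2) * ⟪x u - xs, x u - xs⟫
      + (1/2) * ⟪(β0 * r u * γ u) • (y u - ys) + r u • y' u,
          (β0 * r u * γ u) • (y u - ys) + r u • y' u⟫
      + (-β0 * r u ^ 2 * ((β0 + 2*β - 1) * γ u ^ 2 + γ' u) / 2) * ⟪y u - ys, y u - ys⟫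
      + (1/2) * ⟪(β0 * r u * γ u) • (l u - ls) + r u • l' u,
          (β0 * r u * γ u) • (l u - ls) + r u • l' u⟫
      + (-β0 * r u ^ 2 * ((β0 + 2*β - 1) * γ u ^ 2 + γ' u) / 2) * ⟪l u - ls, l u - ls⟫ := by
    funext u
    rw [hE u, hθ u, hη u, hL, hc0, hp1 u, hp2 u]
    simp only [← real_inner_self_eq_norm_sq]
  -- continuity of E on the interval
  have hxC : ContinuousOn x (Ico t0 T) :=
    fun u hu => (hx1 u hu).differentiableWithinAt.continuousWithinAt
  have hx'C : ContinuousOn x' (Ico t0 T) :=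
    fun u hu => (hx2 u hu).differentiableWithinAt.continuousWithinAt
  have hyC : ContinuousOn y (Ico t0 T) :=
    fun u hu => (hy1 u hu).differentiableWithinAt.continuousWithinAt
  have hy'C : ContinuousOn y' (Ico t0 T) :=
    fun u hu => (hy2 u hu).differentiableWithinAt.continuousWithinAt
  have hlC : ContinuousOn l (Ico t0 T) :=
    fun u hu => (hl1 u hu).differentiableWithinAt.continuousWithinAt
  have hl'C : ContinuousOn l' (Ico t0 T) :=
    fun u hu => (hl2 u hu).differentiableWithinAt.continuousWithinAt
  have hγC : ContinuousOn γ (Ico t0 T) := hγcont.mono Ico_subset_Ici_self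
  have hγ'C : ContinuousOn γ' (Ico t0 T) := hγ'cont.mono Ico_subset_Ici_self
  have hrC : ContinuousOn r (Ico t0 T) := by
    rw [hrdef]
    exact Real.continuous_exp.comp_continuousOn
      (continuousOn_const.mul (hIcont.mono Ico_subset_Ici_self))
  have hFC : ContinuousOn (fun u => A (x u) + B (y u) - b) (Ico t0 T) :=
    ((A.continuous.comp_continuousOn hxC).add (B.continuous.comp_continuousOn hyC)).sub
      continuousOn_const
  have hGxC : ContinuousOn (fun u => (β0 * r u * γ u) • (x u - xs) + r u • x' u) (Ico t0 T) :=
    (((continuousOn_const.mul hrC).mul hγC).smul (hxC.sub continuousOn_const)).add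
      (hrC.smul hx'C)
  have hGyC : ContinuousOn (fun u => (β0 * r u * γ u) • (y u - ys) + r u • y' u) (Ico t0 T) :=
    (((continuousOn_const.mul hrC).mul hγC).smul (hyC.sub continuousOn_const)).add
      (hrC.smul hy'C)
  have hGlC : ContinuousOn (fun u => (β0 * r u * γ u) • (l u - ls) + r u • l' u) (Ico t0 T) :=
    (((continuousOn_const.mul hrC).mul hγC).smul (hlC.sub continuousOn_const)).add
      (hrC.smul hl'C)
  have hηC : ContinuousOn (fun u => -β0 * r u ^ 2 * ((β0 + 2*β - 1) * γ u ^ 2 + γ' u) / 2)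
      (Ico t0 T) :=
    ((continuousOn_const.mul (hrC.pow 2)).mul
      ((continuousOn_const.mul (hγC.pow 2)).add hγ'C)).div_const 2
  have hEcont : ContinuousOn E (Ico t0 T) := by
    rw [hEeq]
    refine ((((((ContinuousOn.add ?_ ?_).add ?_).add ?_).add ?_).add ?_).add ?_)
    · exact (hrC.pow 2).mul (((((hfd.continuous.comp_continuousOn hxC).add
        (hgd.continuous.comp_continuousOn hyC)).add
        (continuousOn_const.inner hFC)).add
        (continuousOn_const.mul (hFC.inner hFC))).sub continuousOn_const)
    · exact continuousOn_const.mul (hGxC.inner hGxC)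
    · exact hηC.mul ((hxC.sub continuousOn_const).inner (hxC.sub continuousOn_const))
    · exact continuousOn_const.mul (hGyC.inner hGyC)
    · exact hηC.mul ((hyC.sub continuousOn_const).inner (hyC.sub continuousOn_const))
    · exact continuousOn_const.mul (hGlC.inner hGlC)
    · exact hηC.mul ((hlC.sub continuousOn_const).inner (hlC.sub continuousOn_const))
  -- the master derivative computation
  have hmaster : ∀ t ∈ Ioo t0 T, ∃ d : ℝ, HasDerivAt E d t ∧ d ≤ 0 := by
    intro t ht
    have ht' : t ∈ Ico t0 T := ⟨ht.1.le, ht.2⟩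
    have hmem : Ico t0 T ∈ nhds t := mem_nhds_iff.2 ⟨Ioo t0 T, Ioo_subset_Ico_self, isOpen_Ioo, ht⟩
    have hxD : HasDerivAt x (x' t) t := (hx1 t ht').hasDerivAt hmem
    have hx'D : HasDerivAt x' (x'' t) t := (hx2 t ht').hasDerivAt hmem
    have hyD : HasDerivAt y (y' t) t := (hy1 t ht').hasDerivAt hmem
    have hy'D : HasDerivAt y' (y'' t) t := (hy2 t ht').hasDerivAt hmem
    have hlD : HasDerivAt l (l' t) t := (hl1 t ht').hasDerivAt hmem
    have hl'D : HasDerivAt l' (l'' t) t := (hl2 t ht').hasDerivAt hmem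
    have hγDt : HasDerivAt γ (γ' t) t := (hγd1 t ht.1.le).hasDerivAt (Ici_mem_nhds ht.1)
    have hγ'Dt : HasDerivAt γ' (γ'' t) t := (hγd2 t ht.1.le).hasDerivAt (Ici_mem_nhds ht.1)
    have hrD : HasDerivAt r (β * γ t * r t) t := by
      rw [hrdef]
      have := ((hID t ht.1).const_mul β).exp
      convert this using 1
      simp only [hrdef]
      ring
    have hr2D : HasDerivAt (fun u => r u ^ 2) (2 * β * γ t * r t ^ 2) t := by
      refine (hrD.pow 2).congr_deriv ?_
      push_cast
      ring
    have hθfD : HasDerivAt (fun u => β0 * r u * γ u)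
        (β0 * (β * γ t * r t) * γ t + β0 * r t * γ' t) t :=
      (hrD.const_mul β0).mul hγDt
    have hηD : HasDerivAt (fun u => -β0 * r u ^ 2 * ((β0 + 2*β - 1) * γ u ^ 2 + γ' u))
        (-β0 * (2 * β * γ t * r t ^ 2 * ((β0 + 2*β - 1) * γ t ^ 2 + γ' t)
          + r t ^ 2 * (2 * (β0 + 2*β - 1) * γ t * γ' t + γ'' t))) t := by
      refine ((hr2D.const_mul (-β0)).mul
        (((hγDt.pow 2).const_mul (β0 + 2*β - 1)).add hγ'Dt)).congr_deriv ?_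
      simp only [Pi.add_apply, Pi.pow_apply]
      push_cast
      ring
    have hfxD : HasDerivAt (fun u => f (x u)) ⟪gradient f (x t), x' t⟫ t := by
      have := ((hfd (x t)).hasGradientAt.hasFDerivAt).comp_hasDerivAt t hxD
      exact this.congr_deriv (by simp [InnerProductSpace.toDual_apply_apply])
    have hgyD : HasDerivAt (fun u => g (y u)) ⟪gradient g (y t), y' t⟫ t := by
      have := ((hgd (y t)).hasGradientAt.hasFDerivAt).comp_hasDerivAt t hyD
      exact this.congr_deriv (by simp [InnerProductSpace.toDual_apply_apply])
    have hFD : HasDerivAt (fun u => A (x u) + B (y u) - b) (A (x' t) + B (y' t)) t :=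
      ((A.hasFDerivAt.comp_hasDerivAt t hxD).add
        (B.hasFDerivAt.comp_hasDerivAt t hyD)).sub_const b
    have hlsFD : HasDerivAt (fun u => ⟪ls, A (x u) + B (y u) - b⟫)
        ⟪ls, A (x' t) + B (y' t)⟫ t := by
      have := HasDerivAt.inner (𝕜 := ℝ) (hasDerivAt_const t ls) hFD
      simpa using this
    have hqD : HasDerivAt (fun u => (1/2 : ℝ) * ⟪A (x u) + B (y u) - b, A (x u) + B (y u) - b⟫)
        ((1/2) * (⟪A (x t) + B (y t) - b, A (x' t) + B (y' t)⟫
          + ⟪A (x' t) + B (y' t), A (x t) + B (y t) - b⟫)) t :=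
      (HasDerivAt.inner (𝕜 := ℝ) hFD hFD).const_mul (1/2)
    have hGxD : HasDerivAt (fun u => (β0 * r u * γ u) • (x u - xs) + r u • x' u)
        (((β0 * r t * γ t) • x' t
            + (β0 * (β * γ t * r t) * γ t + β0 * r t * γ' t) • (x t - xs))
          + (r t • x'' t + (β * γ t * r t) • x' t)) t :=
      (hθfD.smul (hxD.sub_const xs)).add (hrD.smul hx'D)
    have hGyD : HasDerivAt (fun u => (β0 * r u * γ u) • (y u - ys) + r u • y' u)
        (((β0 * r t * γ t) • y' t
            + (β0 * (β * γ t * r t) * γ t + β0 * r t * γ' t) • (y t - ys))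
          + (r t • y'' t + (β * γ t * r t) • y' t)) t :=
      (hθfD.smul (hyD.sub_const ys)).add (hrD.smul hy'D)
    have hGlD : HasDerivAt (fun u => (β0 * r u * γ u) • (l u - ls) + r u • l' u)
        (((β0 * r t * γ t) • l' t
            + (β0 * (β * γ t * r t) * γ t + β0 * r t * γ' t) • (l t - ls))
          + (r t • l'' t + (β * γ t * r t) • l' t)) t :=
      (hθfD.smul (hlD.sub_const ls)).add (hrD.smul hl'D)
    have hWD : HasDerivAt (fun u => f (x u) + g (y u) + ⟪ls, A (x u) + B (y u) - b⟫
        + (1/2) * ⟪A (x u) + B (y u) - b, A (x u) + B (y u) - b⟫ - (f xs + g ys))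
        (⟪gradient f (x t), x' t⟫ + ⟪gradient g (y t), y' t⟫ + ⟪ls, A (x' t) + B (y' t)⟫
          + (1/2) * (⟪A (x t) + B (y t) - b, A (x' t) + B (y' t)⟫
            + ⟪A (x' t) + B (y' t), A (x t) + B (y t) - b⟫)) t :=
      (((hfxD.add hgyD).add hlsFD).add hqD).sub_const _
    refine ⟨2 * β * γ t * r t ^ 2 * (f (x t) + g (y t) + ⟪ls, A (x t) + B (y t) - b⟫
        + (1/2) * ⟪A (x t) + B (y t) - b, A (x t) + B (y t) - b⟫ - (f xs + g ys))
      + r t ^ 2 * (⟪gradient f (x t), x' t⟫ + ⟪gradient g (y t), y' t⟫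
        + ⟪ls, A (x' t) + B (y' t)⟫
        + (1/2) * (⟪A (x t) + B (y t) - b, A (x' t) + B (y' t)⟫
          + ⟪A (x' t) + B (y' t), A (x t) + B (y t) - b⟫))
      + (1/2) * (⟪(β0 * r t * γ t) • (x t - xs) + r t • x' t,
            ((β0 * r t * γ t) • x' t
              + (β0 * (β * γ t * r t) * γ t + β0 * r t * γ' t) • (x t - xs))
            + (r t • x'' t + (β * γ t * r t) • x' t)⟫
          + ⟪((β0 * r t * γ t) • x' t
              + (β0 * (β * γ t * r t) * γ t + β0 * r t * γ' t) • (x t - xs))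
            + (r t • x'' t + (β * γ t * r t) • x' t),
            (β0 * r t * γ t) • (x t - xs) + r t • x' t⟫)
      + ((-β0 * (2 * β * γ t * r t ^ 2 * ((β0 + 2*β - 1) * γ t ^ 2 + γ' t)
          + r t ^ 2 * (2 * (β0 + 2*β - 1) * γ t * γ' t + γ'' t))) / 2 * ⟪x t - xs, x t - xs⟫
        + (-β0 * r t ^ 2 * ((β0 + 2*β - 1) * γ t ^ 2 + γ' t) / 2)
          * (⟪x t - xs, x' t⟫ + ⟪x' t, x t - xs⟫))
      + (1/2) * (⟪(β0 * r t * γ t) • (y t - ys) + r t • y' t,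
            ((β0 * r t * γ t) • y' t
              + (β0 * (β * γ t * r t) * γ t + β0 * r t * γ' t) • (y t - ys))
            + (r t • y'' t + (β * γ t * r t) • y' t)⟫
          + ⟪((β0 * r t * γ t) • y' t
              + (β0 * (β * γ t * r t) * γ t + β0 * r t * γ' t) • (y t - ys))
            + (r t • y'' t + (β * γ t * r t) • y' t),
            (β0 * r t * γ t) • (y t - ys) + r t • y' t⟫)
      + ((-β0 * (2 * β * γ t * r t ^ 2 * ((β0 + 2*β - 1) * γ t ^ 2 + γ' t)
          + r t ^ 2 * (2 * (β0 + 2*β - 1) * γ t * γ' t + γ'' t))) / 2 * ⟪y t - ys, y t - ys⟫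
        + (-β0 * r t ^ 2 * ((β0 + 2*β - 1) * γ t ^ 2 + γ' t) / 2)
          * (⟪y t - ys, y' t⟫ + ⟪y' t, y t - ys⟫))
      + (1/2) * (⟪(β0 * r t * γ t) • (l t - ls) + r t • l' t,
            ((β0 * r t * γ t) • l' t
              + (β0 * (β * γ t * r t) * γ t + β0 * r t * γ' t) • (l t - ls))
            + (r t • l'' t + (β * γ t * r t) • l' t)⟫
          + ⟪((β0 * r t * γ t) • l' t
              + (β0 * (β * γ t * r t) * γ t + β0 * r t * γ' t) • (l t - ls))
            + (r t • l'' t + (β * γ t * r t) • l' t),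
            (β0 * r t * γ t) • (l t - ls) + r t • l' t⟫)
      + ((-β0 * (2 * β * γ t * r t ^ 2 * ((β0 + 2*β - 1) * γ t ^ 2 + γ' t)
          + r t ^ 2 * (2 * (β0 + 2*β - 1) * γ t * γ' t + γ'' t))) / 2 * ⟪l t - ls, l t - ls⟫
        + (-β0 * r t ^ 2 * ((β0 + 2*β - 1) * γ t ^ 2 + γ' t) / 2)
          * (⟪l t - ls, l' t⟫ + ⟪l' t, l t - ls⟫)), ?_, ?_⟩
    · rw [hEeq]
      exact ((((((hr2D.mul hWD).add
        ((HasDerivAt.inner (𝕜 := ℝ) hGxD hGxD).const_mul (1/2))).add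
        ((hηD.div_const 2).mul
          (HasDerivAt.inner (𝕜 := ℝ) (hxD.sub_const xs) (hxD.sub_const xs)))).add
        ((HasDerivAt.inner (𝕜 := ℝ) hGyD hGyD).const_mul (1/2))).add
        ((hηD.div_const 2).mul
          (HasDerivAt.inner (𝕜 := ℝ) (hyD.sub_const ys) (hyD.sub_const ys)))).add
        ((HasDerivAt.inner (𝕜 := ℝ) hGlD hGlD).const_mul (1/2))).add
        ((hηD.div_const 2).mul
          (HasDerivAt.inner (𝕜 := ℝ) (hlD.sub_const ls) (hlD.sub_const ls)))
    · -- the derivative is nonpositive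
      have hg0 : 0 < γ t := hγpos t ht.1.le
      have hne : β0 * γ t ≠ 0 := by positivity
      have hxpp : x'' t = -gradient f (x t)
          - ContinuousLinearMap.adjoint A (l t + (1/(β0 * γ t)) • l' t)
          - ContinuousLinearMap.adjoint A (A (x t) + B (y t) - b) - γ t • x' t := by
        have h := hodex t ht'
        rw [hδ t] at h
        exact eq_sub_of_add_eq h
      have hypp : y'' t = -gradient g (y t)
          - ContinuousLinearMap.adjoint B (l t + (1/(β0 * γ t)) • l' t)
          - ContinuousLinearMap.adjoint B (A (x t) + B (y t) - b) - γ t • y' t := by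
        have h := hodey t ht'
        rw [hδ t] at h
        exact eq_sub_of_add_eq h
      have hlpp : l'' t = A (x t + (1/(β0 * γ t)) • x' t)
          + B (y t + (1/(β0 * γ t)) • y' t) - b - γ t • l' t := by
        have h := hodel t ht'
        rw [hδ t] at h
        exact eq_sub_of_add_eq h
      rw [hxpp, hypp, hlpp]
      -- convexity inequalities
      have hfin1 : f (x t) - f xs ≤ ⟪gradient f (x t), x t - xs⟫ := by
        have h := aux_convex_grad f hfc hfd (x t) xs
        rw [show xs - x t = -(x t - xs) by abel, inner_neg_right] at h
        linarith
      have hgin1 : g (y t) - g ys ≤ ⟪gradient g (y t), y t - ys⟫ := by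
        have h := aux_convex_grad g hgc hgd (y t) ys
        rw [show ys - y t = -(y t - ys) by abel, inner_neg_right] at h
        linarith
      have hfin2 : -⟪ls, A (x t) - A xs⟫ ≤ f (x t) - f xs := by
        have h := aux_convex_grad f hfc hfd xs (x t)
        rw [← hkkt1, inner_neg_left, ContinuousLinearMap.adjoint_inner_left, map_sub] at h
        linarith
      have hgin2 : -⟪ls, B (y t) - B ys⟫ ≤ g (y t) - g ys := by
        have h := aux_convex_grad g hgc hgd ys (y t)
        rw [← hkkt2, inner_neg_left, ContinuousLinearMap.adjoint_inner_left, map_sub] at h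
        linarith
      have hA1 : ⟪ls, A (x t) - A xs⟫ + ⟪ls, B (y t) - B ys⟫ = ⟪ls, A (x t) + B (y t) - b⟫ := by
        rw [← inner_add_right]
        congr 1
        rw [← hkkt3]
        abel
      have hkey : γ' t + β * γ t ^ 2 ≤ 0 :=
        aux_gamma_key t0 β hβpos γ γ' γ'' hγpos hγanti hγd1 hγd2 hγineq ht.1
      have ha'' : 2 * β ^ 2 * γ t ^ 3 ≤ γ'' t := hγineq t ht.1.le
      have hRR : (0:ℝ) ≤ ⟪A (x t) + B (y t) - b, A (x t) + B (y t) - b⟫ := real_inner_self_nonneg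
      have hPx : (0:ℝ) ≤ ⟪x t - xs, x t - xs⟫ := real_inner_self_nonneg
      have hPy : (0:ℝ) ≤ ⟪y t - ys, y t - ys⟫ := real_inner_self_nonneg
      have hPl : (0:ℝ) ≤ ⟪l t - ls, l t - ls⟫ := real_inner_self_nonneg
      have hQx : (0:ℝ) ≤ ⟪x' t, x' t⟫ := real_inner_self_nonneg
      have hQy : (0:ℝ) ≤ ⟪y' t, y' t⟫ := real_inner_self_nonneg
      have hQl : (0:ℝ) ≤ ⟪l' t, l' t⟫ := real_inner_self_nonneg
      have hrt : 0 < r t := hrpos t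
      have hRHS : 2*β*γ t*r t^2 * (f (x t) + g (y t) + ⟪ls, A (x t) + B (y t) - b⟫ + (1/2) * ⟪A (x t) + B (y t) - b, A (x t) + B (y t) - b⟫ - (f xs + g ys))
        - β0*γ t*r t^2 * (⟪gradient f (x t), x t - xs⟫ + ⟪gradient g (y t), y t - ys⟫ + ⟪ls, A (x t) + B (y t) - b⟫ + ⟪A (x t) + B (y t) - b, A (x t) + B (y t) - b⟫)
        + (β0^2*β*r t^2*γ t^3 + β0^2*r t^2*γ t*γ' t + (-β0 * (2 * β * γ t * r t ^ 2 * ((β0 + 2*β - 1) * γ t ^ 2 + γ' t) + r t ^ 2 * (2 * (β0 + 2*β - 1) * γ t * γ' t + γ'' t))) / 2) * (⟪x t - xs, x t - xs⟫ + ⟪y t - ys, y t - ys⟫ + ⟪l t - ls, l t - ls⟫)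
        + (β0+β-1)*γ t*r t^2 * (⟪x' t, x' t⟫ + ⟪y' t, y' t⟫ + ⟪l' t, l' t⟫) ≤ 0 := by
        have hCC : (β0^2*β*r t^2*γ t^3 + β0^2*r t^2*γ t*γ' t + (-β0 * (2 * β * γ t * r t ^ 2 * ((β0 + 2*β - 1) * γ t ^ 2 + γ' t) + r t ^ 2 * (2 * (β0 + 2*β - 1) * γ t * γ' t + γ'' t))) / 2) ≤ 0 := by
          have e1 : (β0^2*β*r t^2*γ t^3 + β0^2*r t^2*γ t*γ' t + (-β0 * (2 * β * γ t * r t ^ 2 * ((β0 + 2*β - 1) * γ t ^ 2 + γ' t) + r t ^ 2 * (2 * (β0 + 2*β - 1) * γ t * γ' t + γ'' t))) / 2)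
              = β0 * r t^2 * ((1-3*β)*γ t*γ' t + β*(1-2*β)*γ t^3 - γ'' t/2) := by ring
          have h1 : (1-3*β)*γ t*γ' t + β*(1-2*β)*γ t^3 - γ'' t/2
              ≤ (1-3*β)*γ t*(γ' t + β*γ t^2) := by nlinarith [ha'']
          have h2 : (1-3*β)*γ t*(γ' t + β*γ t^2) ≤ 0 :=
            mul_nonpos_of_nonneg_of_nonpos
              (mul_nonneg (by linarith) hg0.le) hkey
          rw [e1]
          exact mul_nonpos_of_nonneg_of_nonpos (by positivity) (h1.trans h2)
        have hLL1 : (1/2) * ⟪A (x t) + B (y t) - b, A (x t) + B (y t) - b⟫ ≤ (f (x t) + g (y t) + ⟪ls, A (x t) + B (y t) - b⟫ + (1/2) * ⟪A (x t) + B (y t) - b, A (x t) + B (y t) - b⟫ - (f xs + g ys)) := by linarith [hfin2, hgin2, hA1]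
        have hLL0 : (0:ℝ) ≤ (f (x t) + g (y t) + ⟪ls, A (x t) + B (y t) - b⟫ + (1/2) * ⟪A (x t) + B (y t) - b, A (x t) + B (y t) - b⟫ - (f xs + g ys)) := by linarith
        have hLL2 : (f (x t) + g (y t) + ⟪ls, A (x t) + B (y t) - b⟫ + (1/2) * ⟪A (x t) + B (y t) - b, A (x t) + B (y t) - b⟫ - (f xs + g ys)) + (1/2) * ⟪A (x t) + B (y t) - b, A (x t) + B (y t) - b⟫ ≤ (⟪gradient f (x t), x t - xs⟫ + ⟪gradient g (y t), y t - ys⟫ + ⟪ls, A (x t) + B (y t) - b⟫ + ⟪A (x t) + B (y t) - b, A (x t) + B (y t) - b⟫) := by linarith [hfin1, hgin1]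
        have haux1 : β0 * (γ t * r t^2) * ((f (x t) + g (y t) + ⟪ls, A (x t) + B (y t) - b⟫ + (1/2) * ⟪A (x t) + B (y t) - b, A (x t) + B (y t) - b⟫ - (f xs + g ys)) + (1/2) * ⟪A (x t) + B (y t) - b, A (x t) + B (y t) - b⟫)
            ≤ β0 * (γ t * r t^2) * (⟪gradient f (x t), x t - xs⟫ + ⟪gradient g (y t), y t - ys⟫ + ⟪ls, A (x t) + B (y t) - b⟫ + ⟪A (x t) + B (y t) - b, A (x t) + B (y t) - b⟫) :=
          mul_le_mul_of_nonneg_left hLL2 (by positivity)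
        have haux2 : (2*β - β0) * (γ t * r t^2) * (f (x t) + g (y t) + ⟪ls, A (x t) + B (y t) - b⟫ + (1/2) * ⟪A (x t) + B (y t) - b, A (x t) + B (y t) - b⟫ - (f xs + g ys)) ≤ 0 :=
          mul_nonpos_of_nonpos_of_nonneg
            (mul_nonpos_of_nonpos_of_nonneg (by linarith) (by positivity)) hLL0
        have haux3 : (0:ℝ) ≤ β0 * (γ t * r t^2) * ((1/2) * ⟪A (x t) + B (y t) - b, A (x t) + B (y t) - b⟫) := by positivity
        have haux4 : (β0^2*β*r t^2*γ t^3 + β0^2*r t^2*γ t*γ' t + (-β0 * (2 * β * γ t * r t ^ 2 * ((β0 + 2*β - 1) * γ t ^ 2 + γ' t) + r t ^ 2 * (2 * (β0 + 2*β - 1) * γ t * γ' t + γ'' t))) / 2) * (⟪x t - xs, x t - xs⟫ + ⟪y t - ys, y t - ys⟫ + ⟪l t - ls, l t - ls⟫) ≤ 0 :=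
          mul_nonpos_of_nonpos_of_nonneg hCC (by linarith)
        have haux5 : (β0+β-1) * (γ t * r t^2) * (⟪x' t, x' t⟫ + ⟪y' t, y' t⟫ + ⟪l' t, l' t⟫) ≤ 0 :=
          mul_nonpos_of_nonpos_of_nonneg
            (mul_nonpos_of_nonpos_of_nonneg (by linarith) (by positivity)) (by linarith)
        nlinarith [haux1, haux2, haux3, haux4, haux5]
      exact le_trans (le_of_eq (aux_identity A B (x t) xs (x' t) (gradient f (x t))
        (y t) ys (y' t) (gradient g (y t)) (l t) ls (l' t) b
        β β0 (γ t) (γ' t) (γ'' t) (r t) (f (x t)) (f xs) (g (y t)) (g ys) hne hkkt3)) hRHS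
  refine antitoneOn_of_deriv_nonpos (convex_Ico t0 T) hEcont ?_ ?_
  · rw [interior_Ico]
    intro t ht
    obtain ⟨d, hd, -⟩ := hmaster t ht
    exact hd.differentiableAt.differentiableWithinAt
  · rw [interior_Ico]
    intro t ht
    obtain ⟨d, hd, hle⟩ := hmaster t ht
    rw [hd.deriv]
    exact hle
end
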